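/- arXiv:2305.07294 — 5 statements merged into one kernel-verified Lean document; each statement's English description precedes it below -/
import Mathlib

section
/- For every k ∈ ℕ and every n ∈ ℕ with (k+1) ∣ n, there exists an n-vertex edge-ordered graph G₀ with minimum degree δ(G₀) ≥ ⌊n/2⌋ − 2 that does not contain a perfect P_k^≤-tiling. -/
/-- An *edge-ordered graph*: a simple graph together with a real labeling of
pairs of vertices that is injective on the edge set (hence inducing a linear
order of the edges). -/
structure EdgeOrderedGraph (V : Type*) where
  graph : SimpleGraph V
  label : Sym2 V → ℝ
  inj : ∀ e₁ ∈ graph.edgeSet, ∀ e₂ ∈ graph.edgeSet, label e₁ = label e₂ → e₁ = e₂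

namespace EdgeOrderedGraph

/-- `φ` realizes a copy of the edge-ordered graph `F` inside `G`. -/
def IsCopy {W V : Type*} (F : EdgeOrderedGraph W) (G : EdgeOrderedGraph V) (φ : W → V) : Prop :=
  Function.Injective φ ∧
    (∀ a b : W, F.graph.Adj a b → G.graph.Adj (φ a) (φ b)) ∧
    (∀ a b c d : W, F.graph.Adj a b → F.graph.Adj c d →
      F.label s(a, b) < F.label s(c, d) → G.label s(φ a, φ b) < G.label s(φ c, φ d))

/-- `G` contains a copy of `F`. -/
def ContainsCopy {W V : Type*} (G : EdgeOrderedGraph V) (F : EdgeOrderedGraph W) : Prop :=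
  ∃ φ : W → V, IsCopy F G φ

/-- `G` has a collection of vertex-disjoint copies of `F` covering exactly `S`. -/
def HasPerfectTilingOn {W V : Type*} (F : EdgeOrderedGraph W) (G : EdgeOrderedGraph V)
    (S : Set V) : Prop :=
  ∃ T : Set (W → V),
    (∀ φ ∈ T, IsCopy F G φ) ∧
    (∀ φ ∈ T, ∀ w : W, φ w ∈ S) ∧
    ∀ v ∈ S, ∃! p : (W → V) × W, p.1 ∈ T ∧ p.1 p.2 = v

/-- `G` has a perfect `F`-tiling. -/
def HasPerfectTiling {W V : Type*} (F : EdgeOrderedGraph W) (G : EdgeOrderedGraph V) : Prop :=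
  HasPerfectTilingOn F G Set.univ

/-- `F` is Turánable: some complete graph contains a copy of `F` under every edge-ordering. -/
def Turanable {W : Type*} (F : EdgeOrderedGraph W) : Prop :=
  ∃ t : ℕ, ∀ G : EdgeOrderedGraph (Fin t), G.graph = ⊤ → G.ContainsCopy F

/-- `F` is tileable: some complete graph `K_t` with `|F| ∣ t` has a perfect `F`-tiling
under every edge-ordering. -/
def Tileable {W : Type*} [Fintype W] (F : EdgeOrderedGraph W) : Prop :=
  ∃ t : ℕ, 0 < t ∧ Fintype.card W ∣ t ∧
    ∀ G : EdgeOrderedGraph (Fin t), G.graph = ⊤ → HasPerfectTiling F G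

/-- The degree of a vertex in an edge-ordered graph. -/
noncomputable def degree {V : Type*} (G : EdgeOrderedGraph V) (v : V) : ℕ :=
  (G.graph.neighborSet v).ncard

end EdgeOrderedGraph

open EdgeOrderedGraph

/-- The monotone path `P_k^≤` with `k` edges: consecutive edges increase. -/
noncomputable def monotonePath (k : ℕ) : EdgeOrderedGraph (Fin (k + 1)) where
  graph := SimpleGraph.fromRel (fun a b => a.val + 1 = b.val)
  label := Sym2.lift ⟨fun a b => ((min a.val b.val : ℕ) : ℝ), fun a b => by simp [min_comm]⟩
  inj := by
    intro e₁ h₁ e₂ h₂ heq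
    induction e₁ using Sym2.ind with
    | _ a b =>
    induction e₂ using Sym2.ind with
    | _ c d =>
    rw [SimpleGraph.mem_edgeSet, SimpleGraph.fromRel_adj] at h₁ h₂
    simp only [Sym2.lift_mk] at heq
    have hm : min a.val b.val = min c.val d.val := Nat.cast_injective heq
    have hab : a.val ≠ b.val := fun h => h₁.1 (Fin.val_injective h)
    have hcd : c.val ≠ d.val := fun h => h₂.1 (Fin.val_injective h)
    have key : (a.val = c.val ∧ b.val = d.val) ∨ (a.val = d.val ∧ b.val = c.val) := by
      have h12 := h₁.2; have h22 := h₂.2; omega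
    rw [Sym2.eq_iff]
    rcases key with ⟨x, y⟩ | ⟨x, y⟩
    · exact Or.inl ⟨Fin.val_injective x, Fin.val_injective y⟩
    · exact Or.inr ⟨Fin.val_injective x, Fin.val_injective y⟩

/-!
Split the `n` vertices into two cliques of sizes `a` and `n - a` with `a ∈ {⌊n/2⌋ - 1, ⌊n/2⌋}`
chosen so that `k + 1 ∤ a` (possible since `k + 1 ≥ 2` cannot divide two consecutive numbers),
and order the edges arbitrarily. The minimum degree is `min a (n - a) - 1 ≥ ⌊n/2⌋ - 2`. A copy
of the connected graph `P_k^≤` lies inside one clique, so a perfect tiling would tile the first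
clique by `(k + 1)`-vertex pieces, forcing `k + 1 ∣ a`.
-/

namespace SimpleGraph

variable {V : Type*}

def twoCliques (p : V → Prop) : SimpleGraph V where
  Adj v w := v ≠ w ∧ (p v ↔ p w)
  symm := ⟨fun _ _ h => ⟨h.1.symm, h.2.symm⟩⟩
  loopless := ⟨fun _ h => h.1 rfl⟩

theorem twoCliques_adj {p : V → Prop} {v w : V} :
    (twoCliques p).Adj v w ↔ v ≠ w ∧ (p v ↔ p w) :=
  Iff.rfl

theorem neighborSet_twoCliques (p : V → Prop) (v : V) :
    (twoCliques p).neighborSet v = {w | p w ↔ p v} \ {v} := by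
  ext w
  simp only [mem_neighborSet, twoCliques_adj, Set.mem_sdiff, Set.mem_ofPred_eq,
    Set.mem_singleton_iff]
  exact ⟨fun h => ⟨h.2.symm, Ne.symm h.1⟩, fun h => ⟨Ne.symm h.2, h.1.symm⟩⟩

theorem Reachable.iff_of_adj_iff {G : SimpleGraph V} {p : V → Prop}
    (hp : ∀ v w, G.Adj v w → (p v ↔ p w)) {v w : V} (h : G.Reachable v w) : p v ↔ p w := by
  obtain ⟨walk⟩ := h
  induction walk with
  | nil => rfl
  | cons hadj _ ih => exact (hp _ _ hadj).trans ih

end SimpleGraph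

namespace EdgeOrderedGraph

variable {W V : Type*} {F : EdgeOrderedGraph W} {G : EdgeOrderedGraph V}

noncomputable def ofCountable [Countable V] (H : SimpleGraph V) : EdgeOrderedGraph V where
  graph := H
  label e := (Classical.choose (Countable.exists_injective_nat (Sym2 V)) e : ℝ)
  inj _ _ _ _ h :=
    Classical.choose_spec (Countable.exists_injective_nat (Sym2 V)) (Nat.cast_injective h)

theorem IsCopy.reachable {φ : W → V} (h : IsCopy F G φ) {a b : W}
    (hab : F.graph.Reachable a b) : G.graph.Reachable (φ a) (φ b) :=
  hab.map ⟨φ, h.2.1 _ _⟩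

theorem HasPerfectTilingOn.nat_card_dvd_ncard {S : Set V} (h : HasPerfectTilingOn F G S) :
    Nat.card W ∣ S.ncard := by
  obtain ⟨T, -, hmem, hcover⟩ := h
  have himage : (fun p : (W → V) × W => p.1 p.2) '' (T ×ˢ Set.univ) = S := by
    ext v
    constructor
    · rintro ⟨p, hp, rfl⟩
      exact hmem _ hp.1 _
    · intro hv
      obtain ⟨p, ⟨hpT, hpv⟩, -⟩ := hcover v hv
      exact ⟨p, ⟨hpT, trivial⟩, hpv⟩
  have hinj : Set.InjOn (fun p : (W → V) × W => p.1 p.2) (T ×ˢ Set.univ) :=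
    fun p hp q hq hpq => (hcover _ (hmem _ hp.1 _)).unique ⟨hp.1, rfl⟩ ⟨hq.1, hpq.symm⟩
  rw [← himage, hinj.ncard_image, Set.ncard_prod, Set.ncard_univ]
  exact dvd_mul_left _ _

/-- A perfect tiling by a connected `F` restricts to every union `C` of components of `G`. -/
theorem HasPerfectTilingOn.inter_of_adj_iff (hF : F.graph.Preconnected) {C : Set V}
    (hC : ∀ v w, G.graph.Adj v w → (v ∈ C ↔ w ∈ C)) {S : Set V}
    (h : HasPerfectTilingOn F G S) : HasPerfectTilingOn F G (S ∩ C) := by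
  obtain ⟨T, hcopy, hmem, hcover⟩ := h
  refine ⟨{φ ∈ T | ∀ w, φ w ∈ C}, fun φ hφ => hcopy φ hφ.1,
    fun φ hφ w => ⟨hmem φ hφ.1 w, hφ.2 w⟩, ?_⟩
  rintro v ⟨hvS, hvC⟩
  obtain ⟨p, ⟨hpT, rfl⟩, huniq⟩ := hcover _ hvS
  have hpC (w : W) : p.1 w ∈ C :=
    (((hcopy p.1 hpT).reachable (hF w p.2)).iff_of_adj_iff hC).2 hvC
  exact ⟨p, ⟨⟨hpT, hpC⟩, rfl⟩, fun q hq => huniq q ⟨hq.1.1, hq.2⟩⟩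

theorem not_hasPerfectTiling_ofCountable_twoCliques [Countable V]
    (hF : F.graph.Preconnected) (p : V → Prop) (hp : ¬ Nat.card W ∣ {v | p v}.ncard) :
    ¬ HasPerfectTiling F (ofCountable (SimpleGraph.twoCliques p)) := fun h => by
  have h' := HasPerfectTilingOn.inter_of_adj_iff (G := ofCountable (SimpleGraph.twoCliques p)) hF
    (C := {v | p v}) (fun _ _ hvw => (SimpleGraph.twoCliques_adj.1 hvw).2) h
  rw [Set.univ_inter] at h'
  exact hp h'.nat_card_dvd_ncard

theorem degree_ofCountable_twoCliques [Countable V] (p : V → Prop) (v : V) :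
    (ofCountable (SimpleGraph.twoCliques p)).degree v = {w | p w ↔ p v}.ncard - 1 :=
  (congrArg Set.ncard (SimpleGraph.neighborSet_twoCliques p v)).trans
    (Set.ncard_sdiff_singleton_of_mem Iff.rfl)

end EdgeOrderedGraph

theorem monotonePath_graph (k : ℕ) : (monotonePath k).graph = SimpleGraph.pathGraph (k + 1) := by
  ext a b
  simp only [monotonePath, SimpleGraph.fromRel_adj, SimpleGraph.pathGraph_adj, ne_eq,
    Fin.ext_iff]
  omega

theorem Fin.ncard_setOf_val_lt (n a : ℕ) : {w : Fin n | w.val < a}.ncard = min n a := by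
  rw [Set.ncard_eq_toFinset_card', Set.toFinset_ofPred, Fin.card_filter_val_lt]

theorem Fin.ncard_setOf_not_val_lt (n a : ℕ) : {w : Fin n | ¬ w.val < a}.ncard = n - min n a := by
  rw [← Set.compl_ofPred, Set.ncard_compl, Nat.card_fin, Fin.ncard_setOf_val_lt]

theorem min_sub_one_le_degree_twoCliques_val_lt (n a : ℕ) (v : Fin n) :
    min a (n - a) - 1 ≤
      (ofCountable (SimpleGraph.twoCliques fun w : Fin n => w.val < a)).degree v := by
  rw [degree_ofCountable_twoCliques]
  by_cases hv : v.val < a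
  · simp only [hv, iff_true, Fin.ncard_setOf_val_lt]
    omega
  · simp only [hv, iff_false, Fin.ncard_setOf_not_val_lt]
    omega

theorem Nat.not_dvd_or_not_dvd_sub_one {d m : ℕ} (hd : 2 ≤ d) (hm : 1 ≤ m) :
    ¬ d ∣ m ∨ ¬ d ∣ m - 1 := by
  by_contra! h
  have h1 : d ∣ 1 := by simpa [Nat.sub_sub_self hm] using Nat.dvd_sub h.1 h.2
  have := Nat.le_of_dvd one_pos h1
  omega

/-- **Extremal example.** For every `k ≥ 1` and every `n ≥ 1` divisible by `k+1` there is an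
`n`-vertex edge-ordered graph with minimum degree at least `⌊n/2⌋ - 2` and no perfect
`P_k^≤`-tiling. -/
theorem monotonePath_perfect_tiling_extremal (k n : ℕ) (hk : 0 < k) (hn : 0 < n)
    (hdvd : (k + 1) ∣ n) :
    ∃ G₀ : EdgeOrderedGraph (Fin n),
      (∀ v : Fin n, ((n / 2 : ℕ) : ℤ) - 2 ≤ (G₀.degree v : ℤ)) ∧
      ¬ HasPerfectTiling (monotonePath k) G₀ := by
  have hn2 : 2 ≤ n := le_trans (by omega) (Nat.le_of_dvd hn hdvd)
  obtain ⟨a, ha, hna, hdvda⟩ : ∃ a, a ≤ n / 2 ∧ n / 2 - 1 ≤ a ∧ ¬ (k + 1) ∣ a := by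
    rcases Nat.not_dvd_or_not_dvd_sub_one (d := k + 1) (m := n / 2) (by omega) (by omega)
      with h | h
    · exact ⟨n / 2, le_rfl, by omega, h⟩
    · exact ⟨n / 2 - 1, by omega, le_rfl, h⟩
  refine ⟨ofCountable (SimpleGraph.twoCliques fun w : Fin n => w.val < a), fun v => ?_, ?_⟩
  · have := min_sub_one_le_degree_twoCliques_val_lt n a v
    omega
  · refine not_hasPerfectTiling_ofCountable_twoCliques ?_ _ ?_
    · rw [monotonePath_graph]
      exact SimpleGraph.pathGraph_preconnected _
    · rwa [Nat.card_fin, Fin.ncard_setOf_val_lt, min_eq_right (by omega)]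
end

section
/- An edge-ordered graph F on f vertices is Turánable if and only if each of the four canonical edge-orderings of K_f (min, max, inverse min, inverse max) contains a copy of F. -/
open EdgeOrderedGraph

/-- The standard labeling of the canonical ordering of type `t` of the complete graph on
`Fin n` (`t = 0`: min, `t = 1`: max, `t = 2`: inverse min, `t = 3`: inverse max).
Vertices are `0, …, n-1`, corresponding to `v₁, …, v_n`. -/
noncomputable def canonLabel (n : ℕ) (t : Fin 4) (a b : Fin n) : ℝ :=
  let i : ℝ := ((min a.val b.val : ℕ) : ℝ) + 1
  let j : ℝ := ((max a.val b.val : ℕ) : ℝ) + 1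
  if t = 0 then 2 * n * i + j - 1
  else if t = 1 then (2 * n - 1) * j + i
  else if t = 2 then (2 * n + 1) * i - j
  else 2 * n * j - i + n

/-- `G` is an edge-ordering of the complete graph on `Fin n` whose edge order agrees with
the canonical ordering of type `t`. -/
def IsCanonicalOrdering {n : ℕ} (G : EdgeOrderedGraph (Fin n)) (t : Fin 4) : Prop :=
  G.graph = ⊤ ∧ ∀ a b c d : Fin n, a ≠ b → c ≠ d →
    (G.label s(a, b) < G.label s(c, d) ↔ canonLabel n t a b < canonLabel n t c d)

/-- Standard labels of the edges at the special vertex in a ★-canonical ordering with `n`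
non-special vertices: `p = 0`: larger increasing, `p = 1`: larger decreasing,
`p = 2`: smaller increasing, `p = 3`: smaller decreasing, `p = 4`: middle increasing. -/
noncomputable def starVal (n : ℕ) (p : Fin 5) (i : Fin n) : ℝ :=
  if p = 0 then 3 * (n : ℝ) ^ 2 + ((i.val : ℝ) + 1)
  else if p = 1 then 3 * (n : ℝ) ^ 2 + (n : ℝ) - (i.val : ℝ)
  else if p = 2 then (i.val : ℝ) + 1
  else if p = 3 then (n : ℝ) - (i.val : ℝ)
  else 2 * (n : ℝ) * ((i.val : ℝ) + 1)

/-- The standard labeling of the ★-canonical ordering of the complete graph on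
`Option (Fin n)` with special vertex `none`, canonical part of type `t` and
special-vertex pattern `p`. -/
noncomputable def starLabel (n : ℕ) (t : Fin 4) (p : Fin 5) :
    Option (Fin n) → Option (Fin n) → ℝ
  | some a, some b => canonLabel n t a b
  | none, some i => starVal n p i
  | some i, none => starVal n p i
  | none, none => 0

/-- `G` is an edge-ordering of the complete graph on `Option (Fin n)` whose edge order
agrees with the ★-canonical ordering of type `(t, p)`, the special vertex being `none`. -/
def IsStarCanonical {n : ℕ} (G : EdgeOrderedGraph (Option (Fin n))) (t : Fin 4) (p : Fin 5) :
    Prop :=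
  G.graph = ⊤ ∧ ∀ u v w z : Option (Fin n), u ≠ v → w ≠ z →
    (G.label s(u, v) < G.label s(w, z) ↔ starLabel n t p u v < starLabel n t p w z)


section EdgeLt

variable {α β : Type*} [LinearOrder α] [LinearOrder β] {t : Fin 4} {a b c d : α}

def EdgeLt (t : Fin 4) (a b c d : α) : Prop :=
  match t with
  | 0 => min a b < min c d ∨ min a b = min c d ∧ max a b < max c d
  | 1 => max a b < max c d ∨ max a b = max c d ∧ min a b < min c d
  | 2 => min a b < min c d ∨ min a b = min c d ∧ max c d < max a b
  | 3 => max a b < max c d ∨ max a b = max c d ∧ min c d < min a b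

lemma edgeLt_swap_left : EdgeLt t b a c d ↔ EdgeLt t a b c d := by
  fin_cases t <;> simp only [EdgeLt, min_comm b a, max_comm b a]

lemma edgeLt_swap_right : EdgeLt t a b d c ↔ EdgeLt t a b c d := by
  fin_cases t <;> simp only [EdgeLt, min_comm d c, max_comm d c]

lemma StrictMono.edgeLt_iff {e : α → β} (he : StrictMono e) :
    EdgeLt t (e a) (e b) (e c) (e d) ↔ EdgeLt t a b c d := by
  fin_cases t <;>
    simp [EdgeLt, ← he.monotone.map_min, ← he.monotone.map_max, he.lt_iff_lt,
      he.injective.eq_iff]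

lemma StrictAnti.edgeLt_iff {e : α → β} (he : StrictAnti e) :
    EdgeLt t (e a) (e b) (e c) (e d) ↔ EdgeLt (![1, 0, 3, 2] t) c d a b := by
  fin_cases t <;>
    simp [EdgeLt, ← he.antitone.map_min, ← he.antitone.map_max, he.lt_iff_gt,
      he.injective.eq_iff, eq_comm]

lemma lt_of_edgeLt_of_forall_lt {p : α → α → ℝ} (hp : ∀ a b, p a b = p b a)
    (h : ∀ a b c d, a < b → c < d → EdgeLt t a b c d → p a b < p c d)
    (hab : a ≠ b) (hcd : c ≠ d) (hlt : EdgeLt t a b c d) : p a b < p c d := by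
  rcases hab.lt_or_gt with hab | hab <;> rcases hcd.lt_or_gt with hcd | hcd
  · exact h a b c d hab hcd hlt
  · rw [hp c]
    exact h a b d c hab hcd (edgeLt_swap_right.2 hlt)
  · rw [hp a]
    exact h b a c d hab hcd (edgeLt_swap_left.2 hlt)
  · rw [hp a, hp c]
    exact h b a d c hab hcd (edgeLt_swap_left.2 (edgeLt_swap_right.2 hlt))

lemma sym2_eq_of_not_edgeLt {n : ℕ} {a b c d : Fin n} (h₁ : ¬EdgeLt t a b c d)
    (h₂ : ¬EdgeLt t c d a b) : s(a, b) = s(c, d) := by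
  rw [Sym2.eq_iff]
  fin_cases t <;>
    simp only [EdgeLt, Fin.lt_def, Fin.ext_iff, Fin.coe_min, Fin.coe_max] at h₁ h₂ ⊢ <;> omega

end EdgeLt

lemma lt_iff_lex_of_eq_mul_add {x y : ℝ} {M C i j k l : ℤ} (hx : x = M * i + j + C)
    (hy : y = M * k + l + C) (hjl : j - l < M) (hlj : l - j < M) :
    x < y ↔ i < k ∨ i = k ∧ j < l := by
  subst hx hy
  norm_cast
  constructor
  · intro h
    rcases lt_trichotomy i k with hik | rfl | hki
    · exact .inl hik
    · exact .inr ⟨rfl, by linarith⟩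
    · nlinarith
  · rintro (hik | ⟨rfl, hjl⟩)
    · nlinarith
    · linarith

lemma canonLabel_comm (n : ℕ) (t : Fin 4) (a b : Fin n) :
    canonLabel n t a b = canonLabel n t b a := by
  simp only [canonLabel, min_comm, max_comm]

theorem canonLabel_lt_canonLabel_iff {n : ℕ} (t : Fin 4) (a b c d : Fin n) :
    canonLabel n t a b < canonLabel n t c d ↔ EdgeLt t a b c d := by
  have ha := a.isLt; have hb := b.isLt; have hc := c.isLt; have hd := d.isLt
  -- Each label is `M * i + j + C` for the lexicographic key `(i, j)` of the edge.
  fin_cases t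
  · rw [lt_iff_lex_of_eq_mul_add (M := 2 * n) (C := 2 * n) (i := min a.val b.val)
      (j := max a.val b.val) (k := min c.val d.val) (l := max c.val d.val)
      (by simp [canonLabel]; ring) (by simp [canonLabel]; ring) (by omega) (by omega)]
    simp only [EdgeLt, Fin.lt_def, Fin.ext_iff, Fin.coe_min, Fin.coe_max]
    omega
  · rw [lt_iff_lex_of_eq_mul_add (M := 2 * n - 1) (C := 2 * n) (i := max a.val b.val)
      (j := min a.val b.val) (k := max c.val d.val) (l := min c.val d.val)
      (by simp [canonLabel]; ring) (by simp [canonLabel]; ring) (by omega) (by omega)]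
    simp only [EdgeLt, Fin.lt_def, Fin.ext_iff, Fin.coe_min, Fin.coe_max]
    omega
  · rw [lt_iff_lex_of_eq_mul_add (M := 2 * n + 1) (C := 2 * n) (i := min a.val b.val)
      (j := -max a.val b.val) (k := min c.val d.val) (l := -max c.val d.val)
      (by simp [canonLabel]; ring) (by simp [canonLabel]; ring) (by omega) (by omega)]
    simp only [EdgeLt, Fin.lt_def, Fin.ext_iff, Fin.coe_min, Fin.coe_max]
    omega
  · rw [lt_iff_lex_of_eq_mul_add (M := 2 * n) (C := 3 * n - 1) (i := max a.val b.val)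
      (j := -min a.val b.val) (k := max c.val d.val) (l := -min c.val d.val)
      (by simp [canonLabel]; ring) (by simp [canonLabel]; ring) (by omega) (by omega)]
    simp only [EdgeLt, Fin.lt_def, Fin.ext_iff, Fin.coe_min, Fin.coe_max]
    omega

noncomputable def canonicalGraph (n : ℕ) (t : Fin 4) : EdgeOrderedGraph (Fin n) where
  graph := ⊤
  label := Sym2.lift ⟨canonLabel n t, canonLabel_comm n t⟩
  inj e₁ _ e₂ _ h := by
    induction e₁ using Sym2.ind with | _ a b =>
    induction e₂ using Sym2.ind with | _ c d =>
    simp only [Sym2.lift_mk] at h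
    exact sym2_eq_of_not_edgeLt
      (fun hlt => ((canonLabel_lt_canonLabel_iff t a b c d).2 hlt).ne h)
      (fun hlt => ((canonLabel_lt_canonLabel_iff t c d a b).2 hlt).ne' h)

lemma isCanonicalOrdering_canonicalGraph (n : ℕ) (t : Fin 4) :
    IsCanonicalOrdering (canonicalGraph n t) t :=
  ⟨rfl, fun _ _ _ _ _ _ => Iff.rfl⟩

namespace EdgeOrderedGraph

variable {U V W : Type*} {F : EdgeOrderedGraph W} {G : EdgeOrderedGraph V}
  {H : EdgeOrderedGraph U}

lemma IsCopy.comp {φ : W → V} {e : V → U} (he : IsCopy G H e) (hφ : IsCopy F G φ) :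
    IsCopy F H (e ∘ φ) :=
  ⟨he.1.comp hφ.1, fun a b hab => he.2.1 _ _ (hφ.2.1 a b hab),
    fun a b c d hab hcd hlt =>
      he.2.2 _ _ _ _ (hφ.2.1 a b hab) (hφ.2.1 c d hcd) (hφ.2.2 a b c d hab hcd hlt)⟩

lemma ContainsCopy.trans (hG : G.ContainsCopy H) (hH : H.ContainsCopy F) : G.ContainsCopy F :=
  let ⟨e, he⟩ := hG
  let ⟨φ, hφ⟩ := hH
  ⟨e ∘ φ, he.comp hφ⟩

lemma IsCopy.of_comp {ψ : W → V} {e : V → U} (hG : G.graph = ⊤)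
    (he : ∀ a b c d, a ≠ b → c ≠ d →
      H.label s(e a, e b) < H.label s(e c, e d) → G.label s(a, b) < G.label s(c, d))
    (h : IsCopy F H (e ∘ ψ)) : IsCopy F G ψ := by
  have hψ : Function.Injective ψ := .of_comp h.1
  refine ⟨hψ, fun a b hab => ?_, fun a b c d hab hcd hlt =>
    he _ _ _ _ (hψ.ne hab.ne) (hψ.ne hcd.ne) (h.2.2 a b c d hab hcd hlt)⟩
  rw [hG]
  exact hψ.ne hab.ne

lemma isCopy_canonicalGraph (hG : G.graph = ⊤) {n : ℕ} {t : Fin 4} {ψ : Fin n → V}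
    (hψ : Function.Injective ψ)
    (h : ∀ a b c d, a < b → c < d → EdgeLt t a b c d →
      G.label s(ψ a, ψ b) < G.label s(ψ c, ψ d)) :
    IsCopy (canonicalGraph n t) G ψ := by
  refine ⟨hψ, fun a b hab => ?_, fun a b c d hab hcd hlt => ?_⟩
  · rw [hG]
    exact hψ.ne hab
  · exact lt_of_edgeLt_of_forall_lt (p := fun a b => G.label s(ψ a, ψ b))
      (fun a b => by rw [Sym2.eq_swap]) h hab hcd
      ((canonLabel_lt_canonLabel_iff t a b c d).1 hlt)

end EdgeOrderedGraph

theorem IsCanonicalOrdering.containsCopy {W : Type*} [Fintype W] {F : EdgeOrderedGraph W}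
    {G : EdgeOrderedGraph (Fin (Fintype.card W))} {t : Fin 4} (hG : IsCanonicalOrdering G t)
    {n : ℕ} (h : (canonicalGraph n t).ContainsCopy F) : G.ContainsCopy F := by
  classical
  obtain ⟨φ, hφ⟩ := h
  have hcard : (Finset.univ.image φ).card = Fintype.card W := by
    rw [Finset.card_image_of_injective _ hφ.1, Finset.card_univ]
  let e := (Finset.univ.image φ).orderEmbOfFin hcard
  have hrange : ∀ w, φ w ∈ Set.range e := by simp [e, Finset.range_orderEmbOfFin]
  choose ψ hψ using hrange
  have hφψ : e ∘ ψ = φ := funext hψ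
  refine ⟨ψ, IsCopy.of_comp hG.1 (fun a b c d hab hcd hlt => ?_) (hφψ ▸ hφ)⟩
  rw [hG.2 a b c d hab hcd, canonLabel_lt_canonLabel_iff, ← e.strictMono.edgeLt_iff,
    ← canonLabel_lt_canonLabel_iff]
  exact hlt

section Ramsey

open Finset

variable {κ : Type*}

def IsMonochromatic {α : Type*} (c : Finset α → κ) (r : ℕ) (S : Finset α) : Prop :=
  ∃ k, ∀ B ⊆ S, #B = r → c B = k

def IsRamseyBound (κ : Type*) (r m N : ℕ) : Prop :=
  ∀ {α : Type} [LinearOrder α] (c : Finset α → κ) (A : Finset α), N ≤ #A →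
    ∃ S ⊆ A, m ≤ #S ∧ IsMonochromatic c r S

lemma exists_endHomogeneous {r : ℕ} (h : ∀ m, ∃ N, IsRamseyBound κ r m N) (M : ℕ) :
    ∃ N, ∀ {α : Type} [LinearOrder α] (c : Finset α → κ) (A : Finset α), N ≤ #A →
      ∃ T ⊆ A, M ≤ #T ∧ ∃ col : α → κ, ∀ x ∈ T, ∀ B ⊆ T, #B = r → (∀ b ∈ B, x < b) →
        c (insert x B) = col x := by
  induction M with
  | zero => exact ⟨0, fun c A _ => ⟨∅, empty_subset A, le_rfl, fun _ => c ∅, by simp⟩⟩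
  | succ M ih =>
    obtain ⟨N, hN⟩ := ih
    obtain ⟨N', hN'⟩ := h N
    refine ⟨N' + 1, fun c A hA => ?_⟩
    have hA : A.Nonempty := card_pos.1 (by omega)
    set a := A.min' hA
    have ha : a ∈ A := A.min'_mem hA
    -- Above `a`, pass to a set on which the colour of `insert a B` is constant; recurse there.
    obtain ⟨S, hSA, hS, k, hk⟩ := hN' (fun B => c (insert a B)) (A.erase a)
      (by rw [card_erase_of_mem ha]; omega)
    obtain ⟨T, hTS, hT, col, hcol⟩ := hN c S hS
    have haT : ∀ x ∈ T, a < x := fun x hx =>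
      have hx := hSA (hTS hx)
      lt_of_le_of_ne (A.min'_le x (mem_of_mem_erase hx)) (ne_of_mem_erase hx).symm
    have hsub : ∀ x ∈ insert a T, ∀ B ⊆ insert a T, (∀ b ∈ B, x < b) → B ⊆ T := by
      intro x hx B hB hxB b hb
      refine (mem_insert.1 (hB hb)).resolve_left ?_
      rintro rfl
      rcases mem_insert.1 hx with rfl | hx
      · exact lt_irrefl _ (hxB _ hb)
      · exact lt_asymm (hxB _ hb) (haT x hx)
    refine ⟨insert a T, insert_subset ha (hTS.trans (hSA.trans (erase_subset a A))),
      by rw [card_insert_of_notMem fun h => (haT a h).false]; omega,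
      Function.update col a k, fun x hx B hB hBr hxB => ?_⟩
    rcases mem_insert.1 hx with rfl | hxT
    · rw [Function.update_self]
      exact hk B ((hsub _ hx B hB hxB).trans hTS) hBr
    · rw [Function.update_of_ne (haT x hxT).ne']
      exact hcol x hxT B (hsub _ hx B hB hxB) hBr hxB

theorem exists_isRamseyBound [Fintype κ] (r m : ℕ) : ∃ N, IsRamseyBound κ r m N := by
  induction r generalizing m with
  | zero =>
    exact ⟨m, fun c A hA => ⟨A, subset_rfl, hA, c ∅, fun B _ hB => by rw [card_eq_zero.1 hB]⟩⟩
  | succ r ih =>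
    obtain ⟨N, hN⟩ := exists_endHomogeneous ih (Fintype.card κ * m)
    refine ⟨N, fun c A hA => ?_⟩
    classical
    obtain ⟨T, hTA, hT, col, hcol⟩ := hN c A hA
    have : Nonempty κ := ⟨c ∅⟩
    obtain ⟨k, -, hk⟩ := exists_le_card_fiber_of_mul_le_card_of_maps_to
      (fun x _ => mem_univ (col x)) univ_nonempty (by simpa using hT)
    refine ⟨T.filter (col · = k), (filter_subset _ T).trans hTA, hk, k, fun B hB hBr => ?_⟩
    have hB₀ : B.Nonempty := card_pos.1 (by omega)
    have hmin := mem_filter.1 (hB (B.min'_mem hB₀))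
    rw [← insert_erase (B.min'_mem hB₀), hcol _ hmin.1 (B.erase _)
      (((erase_subset _ B).trans hB).trans (filter_subset _ T))
      (by rw [card_erase_of_mem (B.min'_mem hB₀), hBr]; rfl)
      (fun b hb => B.min'_lt_of_mem_erase_min' hB₀ hb), hmin.2]

end Ramsey

section Pattern

open Finset

variable {α β : Type*} [LinearOrder α] [LinearOrder β] {r : ℕ} {lab : α → α → ℝ}

abbrev EdgePattern (r : ℕ) : Type := Fin r → Fin r → Fin r → Fin r → Prop

def IsPatternHomogeneous (lab : α → α → ℝ) (π : EdgePattern r) : Prop :=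
  ∀ y : Fin r → α, StrictMono y →
    ∀ q₁ q₂ q₃ q₄, lab (y q₁) (y q₂) < lab (y q₃) (y q₄) ↔ π q₁ q₂ q₃ q₄

lemma IsPatternHomogeneous.comp {π : EdgePattern r} (h : IsPatternHomogeneous lab π)
    (x : β ↪o α) : IsPatternHomogeneous (fun a b => lab (x a) (x b)) π :=
  fun y hy => h (x ∘ y) (x.strictMono.comp hy)

lemma IsPatternHomogeneous.neg {π : EdgePattern r} (h : IsPatternHomogeneous lab π) :
    IsPatternHomogeneous (fun a b => -lab a b) (fun q₁ q₂ q₃ q₄ => π q₃ q₄ q₁ q₂) :=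
  fun y hy q₁ q₂ q₃ q₄ => neg_lt_neg_iff.trans (h y hy q₃ q₄ q₁ q₂)

theorem exists_isPatternHomogeneous (r m : ℕ) :
    ∃ N, ∀ lab : Fin N → Fin N → ℝ, ∃ (x : Fin m ↪o Fin N) (π : EdgePattern r),
      IsPatternHomogeneous (fun i j => lab (x i) (x j)) π := by
  classical
  obtain ⟨N, hN⟩ := exists_isRamseyBound (κ := EdgePattern r) r m
  refine ⟨N, fun lab => ?_⟩
  let c : Finset (Fin N) → EdgePattern r := fun B =>
    if hB : #B = r then fun q₁ q₂ q₃ q₄ =>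
      lab (B.orderEmbOfFin hB q₁) (B.orderEmbOfFin hB q₂) <
        lab (B.orderEmbOfFin hB q₃) (B.orderEmbOfFin hB q₄)
    else fun _ _ _ _ => False
  obtain ⟨S, -, hS, π, hπ⟩ := hN c univ (by simp)
  obtain ⟨S', hS'S, hS'⟩ := exists_subset_card_eq hS
  let x := S'.orderEmbOfFin hS'
  refine ⟨x, π, fun y hy q₁ q₂ q₃ q₄ => ?_⟩
  have hxy := x.strictMono.comp hy
  have hcard : #(univ.image (x ∘ y)) = r := by
    rw [card_image_of_injective _ hxy.injective, card_fin]
  have hB : (univ.image (x ∘ y)).orderEmbOfFin hcard = x ∘ y :=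
    (orderEmbOfFin_unique hcard (fun q => mem_image_of_mem _ (mem_univ q)) hxy).symm
  have hBS : univ.image (x ∘ y) ⊆ S := fun _ hb => by
    obtain ⟨q, -, rfl⟩ := mem_image.1 hb
    exact hS'S (S'.orderEmbOfFin_mem hS' _)
  have := hπ _ hBS hcard
  simp only [c, dif_pos hcard, hB] at this
  exact Iff.of_eq (congrFun (congrFun (congrFun (congrFun this q₁) q₂) q₃) q₄)

end Pattern

section Configurations

variable {α : Type*} [LinearOrder α] {lab : α → α → ℝ} {π₃ : EdgePattern 3}
  {π₄ : EdgePattern 4} {a b c d : α}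

def IsEdgeInjective (lab : α → α → ℝ) : Prop :=
  ∀ ⦃i j k l⦄, i < j → k < l → lab i j = lab k l → i = k ∧ j = l

lemma IsEdgeInjective.lt_of_not_lt (hinj : IsEdgeInjective lab) {i j k l : α} (hij : i < j)
    (hkl : k < l) (hne : ¬(i = k ∧ j = l)) (h : ¬lab i j < lab k l) : lab k l < lab i j :=
  (not_lt.1 h).lt_of_ne fun e => hne ((hinj hkl hij e).imp Eq.symm Eq.symm)

lemma strictMono_vecCons₃ (hab : a < b) (hbc : b < c) : StrictMono ![a, b, c] := by
  simp [Fin.strictMono_iff_lt_succ, Fin.forall_fin_succ, hab, hbc]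

lemma strictMono_vecCons₄ (hab : a < b) (hbc : b < c) (hcd : c < d) :
    StrictMono ![a, b, c, d] := by
  simp [Fin.strictMono_iff_lt_succ, Fin.forall_fin_succ, hab, hbc, hcd]

lemma lt_iff_of_shareMin (hom₃ : IsPatternHomogeneous lab π₃) (hab : a < b) (hbc : b < c) :
    lab a b < lab a c ↔ π₃ 0 1 0 2 :=
  hom₃ _ (strictMono_vecCons₃ hab hbc) 0 1 0 2

lemma lt_iff_of_shareMax (hom₃ : IsPatternHomogeneous lab π₃) (hab : a < b) (hbc : b < c) :
    lab a c < lab b c ↔ π₃ 0 2 1 2 :=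
  hom₃ _ (strictMono_vecCons₃ hab hbc) 0 2 1 2

lemma lt_iff_of_path (hom₃ : IsPatternHomogeneous lab π₃) (hab : a < b) (hbc : b < c) :
    lab a b < lab b c ↔ π₃ 0 1 1 2 :=
  hom₃ _ (strictMono_vecCons₃ hab hbc) 0 1 1 2

lemma lt_iff_of_nested (hom₄ : IsPatternHomogeneous lab π₄) (hab : a < b) (hbc : b < c)
    (hcd : c < d) : lab a d < lab b c ↔ π₄ 0 3 1 2 :=
  hom₄ _ (strictMono_vecCons₄ hab hbc hcd) 0 3 1 2

lemma lt_of_not_shareMin (hinj : IsEdgeInjective lab) (hom₃ : IsPatternHomogeneous lab π₃)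
    (hab : a < b) (hbc : b < c) (hP : ¬π₃ 0 1 0 2) : lab a c < lab a b :=
  hinj.lt_of_not_lt hab (hab.trans hbc) (fun h => hbc.ne h.2)
    (mt (lt_iff_of_shareMin hom₃ hab hbc).1 hP)

lemma lt_of_not_shareMax (hinj : IsEdgeInjective lab) (hom₃ : IsPatternHomogeneous lab π₃)
    (hab : a < b) (hbc : b < c) (hR : ¬π₃ 0 2 1 2) : lab b c < lab a c :=
  hinj.lt_of_not_lt (hab.trans hbc) hbc (fun h => hab.ne h.1)
    (mt (lt_iff_of_shareMax hom₃ hab hbc).1 hR)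

lemma lt_of_not_nested (hinj : IsEdgeInjective lab) (hom₄ : IsPatternHomogeneous lab π₄)
    (hab : a < b) (hbc : b < c) (hcd : c < d) (hU : ¬π₄ 0 3 1 2) : lab b c < lab a d :=
  hinj.lt_of_not_lt ((hab.trans hbc).trans hcd) hbc (fun h => hab.ne h.1)
    (mt (lt_iff_of_nested hom₄ hab hbc hcd).1 hU)

lemma lt_of_disjoint (hom₃ : IsPatternHomogeneous lab π₃) (hQ : π₃ 0 1 1 2)
    (hab : a < b) (hbc : b < c) (hcd : c < d) : lab a b < lab c d :=
  ((lt_iff_of_path hom₃ hab hbc).2 hQ).trans ((lt_iff_of_path hom₃ hbc hcd).2 hQ)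

lemma lt_of_crossing (hinj : IsEdgeInjective lab) (hom₃ : IsPatternHomogeneous lab π₃)
    (hQ : π₃ 0 1 1 2) (hab : a < b) (hbc : b < c) (hcd : c < d) : lab a c < lab b d := by
  by_cases hP : π₃ 0 1 0 2
  · by_cases hR : π₃ 0 2 1 2
    · exact ((lt_iff_of_shareMin hom₃ (hab.trans hbc) hcd).2 hP).trans
        ((lt_iff_of_shareMax hom₃ hab (hbc.trans hcd)).2 hR)
    · exact ((lt_iff_of_path hom₃ (hab.trans hbc) hcd).2 hQ).trans
        (lt_of_not_shareMax hinj hom₃ hbc hcd hR)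
  · exact (lt_of_not_shareMin hinj hom₃ hab hbc hP).trans
      ((lt_iff_of_path hom₃ hab (hbc.trans hcd)).2 hQ)

lemma lt_of_configuration (hinj : IsEdgeInjective lab) (hom₃ : IsPatternHomogeneous lab π₃)
    (hom₄ : IsPatternHomogeneous lab π₄) (hQ : π₃ 0 1 1 2) {i j k l : α}
    (hij : i < j) (hkl : k < l)
    (h : i = k ∧ j < l ∧ π₃ 0 1 0 2 ∨ i = k ∧ l < j ∧ ¬π₃ 0 1 0 2 ∨
      j = l ∧ i < k ∧ π₃ 0 2 1 2 ∨ j = l ∧ k < i ∧ ¬π₃ 0 2 1 2 ∨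
      i < k ∧ j ≤ k ∨ i < k ∧ k < j ∧ j < l ∨
      i < k ∧ l < j ∧ π₄ 0 3 1 2 ∨ k < i ∧ j < l ∧ ¬π₄ 0 3 1 2) :
    lab i j < lab k l := by
  rcases h with ⟨rfl, hjl, hP⟩ | ⟨rfl, hlj, hP⟩ | ⟨rfl, hik, hR⟩ | ⟨rfl, hki, hR⟩ | ⟨hik, hjk⟩ |
    ⟨hik, hkj, hjl⟩ | ⟨hik, hlj, hU⟩ | ⟨hki, hjl, hU⟩
  · exact (lt_iff_of_shareMin hom₃ hij hjl).2 hP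
  · exact lt_of_not_shareMin hinj hom₃ hkl hlj hP
  · exact (lt_iff_of_shareMax hom₃ hik hkl).2 hR
  · exact lt_of_not_shareMax hinj hom₃ hki hij hR
  · rcases hjk.lt_or_eq with hjk | rfl
    · exact lt_of_disjoint hom₃ hQ hij hjk hkl
    · exact (lt_iff_of_path hom₃ hij hkl).2 hQ
  · exact lt_of_crossing hinj hom₃ hQ hik hkj hjl
  · exact (lt_iff_of_nested hom₄ hik hkl hlj).2 hU
  · exact lt_of_not_nested hinj hom₄ hki hij hjl hU

lemma shareMin_or_shareMax (hinj : IsEdgeInjective lab) (hom₃ : IsPatternHomogeneous lab π₃)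
    (hQ : π₃ 0 1 1 2) (hab : a < b) (hbc : b < c) : π₃ 0 1 0 2 ∨ π₃ 0 2 1 2 := by
  by_contra! h
  exact lt_irrefl _ ((((lt_iff_of_path hom₃ hab hbc).2 hQ).trans
    (lt_of_not_shareMax hinj hom₃ hab hbc h.2)).trans (lt_of_not_shareMin hinj hom₃ hab hbc h.1))

lemma not_nested_of_shareMin_of_not_shareMax (hinj : IsEdgeInjective lab)
    (hom₃ : IsPatternHomogeneous lab π₃) (hom₄ : IsPatternHomogeneous lab π₄)
    (hab : a < b) (hbc : b < c) (hcd : c < d) (hP : π₃ 0 1 0 2) (hR : ¬π₃ 0 2 1 2) :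
    ¬π₄ 0 3 1 2 := fun hU =>
  lt_irrefl _ ((((lt_iff_of_nested hom₄ hab hbc hcd).2 hU).trans
    ((lt_iff_of_shareMin hom₃ hbc hcd).2 hP)).trans
    (lt_of_not_shareMax hinj hom₃ hab (hbc.trans hcd) hR))

lemma nested_of_not_shareMin_of_shareMax (hinj : IsEdgeInjective lab)
    (hom₃ : IsPatternHomogeneous lab π₃) (hom₄ : IsPatternHomogeneous lab π₄)
    (hab : a < b) (hbc : b < c) (hcd : c < d) (hP : ¬π₃ 0 1 0 2) (hR : π₃ 0 2 1 2) :
    π₄ 0 3 1 2 := by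
  by_contra hU
  exact lt_irrefl _ (((lt_of_not_nested hinj hom₄ hab hbc hcd hU).trans
    (lt_of_not_shareMin hinj hom₃ (hab.trans hbc) hcd hP)).trans
    ((lt_iff_of_shareMax hom₃ hab hbc).2 hR))

end Configurations

section Classification

variable {m : ℕ} {lab : Fin m → Fin m → ℝ} {π₃ : EdgePattern 3} {π₄ : EdgePattern 4}

/-- Of two edges sharing their smaller (resp. larger) endpoint, the canonical ordering of type
`t` puts first the one with the smaller other endpoint iff `P` (resp. `R`); of two nested edges
it puts the outer one first iff `U`. -/
def CanonicalBits (t : Fin 4) (P R U : Prop) : Prop :=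
  match t with
  | 0 => P ∧ R ∧ U
  | 1 => P ∧ R ∧ ¬U
  | 2 => ¬P ∧ R ∧ U
  | 3 => P ∧ ¬R ∧ ¬U

lemma lt_of_edgeLt_of_canonicalBits (hinj : IsEdgeInjective lab)
    (hom₃ : IsPatternHomogeneous lab π₃) (hom₄ : IsPatternHomogeneous lab π₄) (hQ : π₃ 0 1 1 2)
    {t : Fin 4} (ht : CanonicalBits t (π₃ 0 1 0 2) (π₃ 0 2 1 2) (π₄ 0 3 1 2)) {i j k l : Fin m}
    (hij : i < j) (hkl : k < l) (h : EdgeLt t i j k l) : lab i j < lab k l := by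
  refine lt_of_configuration hinj hom₃ hom₄ hQ hij hkl ?_
  simp only [EdgeLt, min_eq_left hij.le, max_eq_right hij.le, min_eq_left hkl.le,
    max_eq_right hkl.le] at h
  fin_cases t <;> obtain ⟨hP, hR, hU⟩ := ht <;>
    simp only [hP, hR, hU, not_true_eq_false, not_false_eq_true, and_true, and_false, or_false,
      false_or] <;> omega

lemma exists_edgeLt_imp_lt_of_path (hm : 4 ≤ m) (hinj : IsEdgeInjective lab)
    (hom₃ : IsPatternHomogeneous lab π₃) (hom₄ : IsPatternHomogeneous lab π₄) (hQ : π₃ 0 1 1 2) :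
    ∃ t, ∀ i j k l, i < j → k < l → EdgeLt t i j k l → lab i j < lab k l := by
  have h₀₁ : (⟨0, by omega⟩ : Fin m) < ⟨1, by omega⟩ := Fin.mk_lt_mk.2 (by norm_num)
  have h₁₂ : (⟨1, by omega⟩ : Fin m) < ⟨2, by omega⟩ := Fin.mk_lt_mk.2 (by norm_num)
  have h₂₃ : (⟨2, by omega⟩ : Fin m) < ⟨3, by omega⟩ := Fin.mk_lt_mk.2 (by norm_num)
  suffices ∃ t, CanonicalBits t (π₃ 0 1 0 2) (π₃ 0 2 1 2) (π₄ 0 3 1 2) by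
    obtain ⟨t, ht⟩ := this
    exact ⟨t, fun i j k l => lt_of_edgeLt_of_canonicalBits hinj hom₃ hom₄ hQ ht⟩
  by_cases hP : π₃ 0 1 0 2 <;> by_cases hR : π₃ 0 2 1 2
  · by_cases hU : π₄ 0 3 1 2
    exacts [⟨0, hP, hR, hU⟩, ⟨1, hP, hR, hU⟩]
  · exact ⟨3, hP, hR, not_nested_of_shareMin_of_not_shareMax hinj hom₃ hom₄ h₀₁ h₁₂ h₂₃ hP hR⟩
  · exact ⟨2, hP, hR, nested_of_not_shareMin_of_shareMax hinj hom₃ hom₄ h₀₁ h₁₂ h₂₃ hP hR⟩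
  · exact ((shareMin_or_shareMax hinj hom₃ hQ h₀₁ h₁₂).elim hP hR).elim

theorem exists_edgeLt_imp_lt (hm : 4 ≤ m) (hinj : IsEdgeInjective lab)
    (hom₃ : IsPatternHomogeneous lab π₃) (hom₄ : IsPatternHomogeneous lab π₄) :
    ∃ t, (∀ i j k l, i < j → k < l → EdgeLt t i j k l → lab i j < lab k l) ∨
      (∀ i j k l, i < j → k < l → EdgeLt t i j k l → lab k l < lab i j) := by
  by_cases hQ : π₃ 0 1 1 2
  · obtain ⟨t, ht⟩ := exists_edgeLt_imp_lt_of_path hm hinj hom₃ hom₄ hQ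
    exact ⟨t, .inl ht⟩
  -- Paths decrease, so they increase for the negated labels.
  have h₀₁ : (⟨0, by omega⟩ : Fin m) < ⟨1, by omega⟩ := Fin.mk_lt_mk.2 (by norm_num)
  have h₁₂ : (⟨1, by omega⟩ : Fin m) < ⟨2, by omega⟩ := Fin.mk_lt_mk.2 (by norm_num)
  have hQ' : π₃ 1 2 0 1 := (hom₃ _ (strictMono_vecCons₃ h₀₁ h₁₂) 1 2 0 1).1
    (hinj.lt_of_not_lt h₀₁ h₁₂ (fun h => h₀₁.ne h.1) (mt (lt_iff_of_path hom₃ h₀₁ h₁₂).1 hQ))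
  have hinj' : IsEdgeInjective fun i j => -lab i j := fun i j k l hij hkl h =>
    hinj hij hkl (neg_inj.1 h)
  obtain ⟨t, ht⟩ := exists_edgeLt_imp_lt_of_path hm hinj' hom₃.neg hom₄.neg hQ'
  exact ⟨t, .inr fun i j k l hij hkl h => neg_lt_neg_iff.1 (ht i j k l hij hkl h)⟩

end Classification

lemma isEdgeInjective_label {α V : Type*} [LinearOrder α] {G : EdgeOrderedGraph V}
    (hG : G.graph = ⊤) {x : α → V} (hx : Function.Injective x) :
    IsEdgeInjective fun i j => G.label s(x i, x j) := by
  intro i j k l hij hkl h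
  rcases Sym2.eq_iff.1 (G.inj _ (by rw [hG]; exact hx.ne hij.ne) _
    (by rw [hG]; exact hx.ne hkl.ne) h) with ⟨hik, hjl⟩ | ⟨hil, hjk⟩
  · exact ⟨hx hik, hx hjl⟩
  · obtain rfl := hx hil
    obtain rfl := hx hjk
    exact absurd hij hkl.not_gt

theorem exists_containsCopy_canonicalGraph (f : ℕ) :
    ∃ N, ∀ G : EdgeOrderedGraph (Fin N), G.graph = ⊤ →
      ∃ t, G.ContainsCopy (canonicalGraph f t) := by
  obtain ⟨N₄, hN₄⟩ := exists_isPatternHomogeneous 4 (f + 4)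
  obtain ⟨N, hN⟩ := exists_isPatternHomogeneous 3 N₄
  refine ⟨N, fun G hG => ?_⟩
  obtain ⟨x₃, π₃, hom₃⟩ := hN fun a b => G.label s(a, b)
  obtain ⟨x₄, π₄, hom₄⟩ := hN₄ fun i j => G.label s(x₃ i, x₃ j)
  let x := x₄.trans x₃
  have hf : f ≤ f + 4 := by omega
  obtain ⟨t, ht | ht⟩ := exists_edgeLt_imp_lt (lab := fun i j => G.label s(x i, x j)) (by omega)
    (isEdgeInjective_label hG x.injective) (hom₃.comp x₄) hom₄
  · have he := Fin.strictMono_castLE hf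
    exact ⟨t, x ∘ Fin.castLE hf, isCopy_canonicalGraph hG (x.injective.comp he.injective)
      fun a b c d hab hcd h => ht _ _ _ _ (he hab) (he hcd) (he.edgeLt_iff.2 h)⟩
  · have he := (Fin.strictMono_castLE hf).comp_strictAnti Fin.rev_strictAnti
    refine ⟨![1, 0, 3, 2] t, x ∘ Fin.castLE hf ∘ Fin.rev,
      isCopy_canonicalGraph hG (x.injective.comp he.injective) fun a b c d hab hcd h => ?_⟩
    rw [Sym2.eq_swap, Sym2.eq_swap (a := (x ∘ Fin.castLE hf ∘ Fin.rev) c)]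
    exact ht _ _ _ _ (he hcd) (he hab)
      (edgeLt_swap_left.2 (edgeLt_swap_right.2 (he.edgeLt_iff.2 h)))

/-- **Turánable characterization.** An edge-ordered graph `F` on `f` vertices is Turánable
if and only if each of the four canonical edge-orderings of `K_f` contains a copy of `F`. -/
theorem turanable_characterization {W : Type} [Fintype W] (F : EdgeOrderedGraph W) :
    Turanable F ↔
      ∀ (t : Fin 4) (G : EdgeOrderedGraph (Fin (Fintype.card W))),
        IsCanonicalOrdering G t → G.ContainsCopy F := by
  constructor
  · rintro ⟨n, hn⟩ t G hG
    exact hG.containsCopy (hn (canonicalGraph n t) rfl)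
  · intro h
    obtain ⟨N, hN⟩ := exists_containsCopy_canonicalGraph (Fintype.card W)
    refine ⟨N, fun G hG => ?_⟩
    obtain ⟨t, ht⟩ := hN G hG
    exact ht.trans (h t _ (isCanonicalOrdering_canonicalGraph _ t))
end

section
/- For every n ≥ 4, the edge-ordered graph D_n is Turánable but is not tileable. -/
open EdgeOrderedGraph

/-- Reference labeling for the edge-ordered graph `D_n` (on `0`-indexed vertices:
`u₁ = 0`, `u_n = n-1`): edge `u₁u_j` gets label `j-1`, edge `u_iu_n` (for `1 < i < n`)
gets label `n-1+(i-1)`, realizing `u₁u₂ < … < u₁u_n < u₂u_n < … < u_{n-1}u_n`. -/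
noncomputable def dnLabel (n : ℕ) (a b : ℕ) : ℝ :=
  if a = 0 ∨ b = 0 then ((max a b : ℕ) : ℝ) else (n : ℝ) - 1 + ((min a b : ℕ) : ℝ)

/-- `G` is (an isomorphic copy in standard position of) the edge-ordered graph `D_n`. -/
def IsDn (n : ℕ) (G : EdgeOrderedGraph (Fin n)) : Prop :=
  (∀ a b : Fin n, G.graph.Adj a b ↔
    (a ≠ b ∧ (a.val = 0 ∨ b.val = 0 ∨ a.val = n - 1 ∨ b.val = n - 1))) ∧
  ∀ a b c d : Fin n, G.graph.Adj a b → G.graph.Adj c d →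
    (G.label s(a, b) < G.label s(c, d) ↔ dnLabel n a.val b.val < dnLabel n c.val d.val)

namespace DnAux

theorem extract2 (c : ℕ) (m : ℕ) : ∃ N : ℕ, ∀ f : ℕ → ℕ → Fin (c+1), ∀ S : Finset ℕ,
    N ≤ S.card → ∃ x : Fin m → ℕ, StrictMono x ∧ (∀ i, x i ∈ S) ∧
      ∀ i j j' : Fin m, i < j → i < j' → f (x i) (x j) = f (x i) (x j') := by
  induction m with
  | zero =>
      exact ⟨0, fun f S _ =>
        ⟨fun i => i.elim0, fun i j => i.elim0, fun i => i.elim0, fun i => i.elim0⟩⟩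
  | succ m ih =>
    obtain ⟨N, hN⟩ := ih
    refine ⟨(c+1) * N + 1, fun f S hS => ?_⟩
    have hne : S.Nonempty := Finset.card_pos.mp (by omega)
    set a := S.min' hne with ha
    have haS : a ∈ S := S.min'_mem hne
    have hcard : (Finset.univ : Finset (Fin (c+1))).card * N ≤ (S.erase a).card := by
      rw [Finset.card_erase_of_mem haS]
      simp only [Finset.card_univ, Fintype.card_fin]
      omega
    obtain ⟨γ, _, hγ⟩ := Finset.exists_le_card_fiber_of_mul_le_card_of_maps_to
      (f := fun s => f a s) (fun s _ => Finset.mem_univ _) Finset.univ_nonempty hcard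
    obtain ⟨x, hmono, hmem, htail⟩ := hN f _ hγ
    have hmem' : ∀ i, x i ∈ S.erase a ∧ f a (x i) = γ := by
      intro i
      have := hmem i
      rw [Finset.mem_filter] at this
      exact this
    have halt : ∀ i, a < x i := by
      intro i
      have h1 := (hmem' i).1
      rw [Finset.mem_erase] at h1
      exact lt_of_le_of_ne (S.min'_le _ h1.2) (Ne.symm h1.1)
    refine ⟨Fin.cases a x, ?_, ?_, ?_⟩
    · intro i j hij
      induction i using Fin.cases with
      | zero =>
        induction j using Fin.cases with
        | zero => exact absurd hij (lt_irrefl _)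
        | succ j => simpa using halt j
      | succ i =>
        induction j using Fin.cases with
        | zero => exact absurd hij (by simp [Fin.lt_def])
        | succ j =>
          simp only [Fin.cases_succ]
          exact hmono (by simpa [Fin.succ_lt_succ_iff] using hij)
    · intro i
      induction i using Fin.cases with
      | zero => simpa using haS
      | succ i =>
        simp only [Fin.cases_succ]
        have h1 := (hmem' i).1
        rw [Finset.mem_erase] at h1
        exact h1.2
    · intro i j j' hij hij'
      induction i using Fin.cases with
      | zero =>
        induction j using Fin.cases with
        | zero => exact absurd hij (lt_irrefl _)
        | succ j =>
          induction j' using Fin.cases with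
          | zero => exact absurd hij' (lt_irrefl _)
          | succ j' =>
            simp only [Fin.cases_succ, Fin.cases_zero]
            rw [(hmem' j).2, (hmem' j').2]
      | succ i =>
        induction j using Fin.cases with
        | zero => exact absurd hij (by simp [Fin.lt_def])
        | succ j =>
          induction j' using Fin.cases with
          | zero => exact absurd hij' (by simp [Fin.lt_def])
          | succ j' =>
            simp only [Fin.cases_succ]
            exact htail i j j' (by simpa [Fin.succ_lt_succ_iff] using hij)
              (by simpa [Fin.succ_lt_succ_iff] using hij')

theorem extract3 (c : ℕ) (m : ℕ) : ∃ N : ℕ, ∀ f : ℕ → ℕ → ℕ → Fin (c+1), ∀ S : Finset ℕ,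
    N ≤ S.card → ∃ x : Fin m → ℕ, StrictMono x ∧ (∀ i, x i ∈ S) ∧
      ∀ i j k k' : Fin m, i < j → j < k → j < k' →
        f (x i) (x j) (x k) = f (x i) (x j) (x k') := by
  induction m with
  | zero =>
      exact ⟨0, fun f S _ =>
        ⟨fun i => i.elim0, fun i j => i.elim0, fun i => i.elim0, fun i => i.elim0⟩⟩
  | succ m ih =>
    obtain ⟨N, hN⟩ := ih
    obtain ⟨N₂, hN₂⟩ := extract2 c N
    refine ⟨N₂ + 1, fun f S hS => ?_⟩
    have hne : S.Nonempty := Finset.card_pos.mp (by omega)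
    set a := S.min' hne with ha
    have haS : a ∈ S := S.min'_mem hne
    have hcard : N₂ ≤ (S.erase a).card := by
      rw [Finset.card_erase_of_mem haS]; omega
    obtain ⟨y, hymono, hymem, hytail⟩ := hN₂ (fun s u => f a s u) _ hcard
    have hycard : N ≤ (Finset.image y Finset.univ).card := by
      rw [Finset.card_image_of_injective _ hymono.injective, Finset.card_univ,
        Fintype.card_fin]
    obtain ⟨x, hmono, hmem, htail⟩ := hN f _ hycard
    have hidx : ∀ i, ∃ b : Fin N, y b = x i := by
      intro i
      have := hmem i
      rw [Finset.mem_image] at this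
      obtain ⟨b, _, hb⟩ := this
      exact ⟨b, hb⟩
    have hmemS' : ∀ i, x i ∈ S.erase a := by
      intro i; obtain ⟨b, hb⟩ := hidx i; rw [← hb]; exact hymem b
    have halt : ∀ i, a < x i := by
      intro i
      have h1 := hmemS' i
      rw [Finset.mem_erase] at h1
      exact lt_of_le_of_ne (S.min'_le _ h1.2) (Ne.symm h1.1)
    refine ⟨Fin.cases a x, ?_, ?_, ?_⟩
    · intro i j hij
      induction i using Fin.cases with
      | zero =>
        induction j using Fin.cases with
        | zero => exact absurd hij (lt_irrefl _)
        | succ j => simpa using halt j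
      | succ i =>
        induction j using Fin.cases with
        | zero => exact absurd hij (by simp [Fin.lt_def])
        | succ j =>
          simp only [Fin.cases_succ]
          exact hmono (by simpa [Fin.succ_lt_succ_iff] using hij)
    · intro i
      induction i using Fin.cases with
      | zero => simpa using haS
      | succ i =>
        simp only [Fin.cases_succ]
        have h1 := hmemS' i
        rw [Finset.mem_erase] at h1
        exact h1.2
    · intro i j k k' hij hjk hjk'
      induction i using Fin.cases with
      | zero =>
        induction j using Fin.cases with
        | zero => exact absurd hij (lt_irrefl _)
        | succ j =>
          induction k using Fin.cases with
          | zero => exact absurd hjk (by simp [Fin.lt_def])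
          | succ k =>
            induction k' using Fin.cases with
            | zero => exact absurd hjk' (by simp [Fin.lt_def])
            | succ k' =>
              simp only [Fin.cases_succ, Fin.cases_zero]
              obtain ⟨b, hb⟩ := hidx j
              obtain ⟨d, hd⟩ := hidx k
              obtain ⟨d', hd'⟩ := hidx k'
              have hbd : b < d := by
                rw [← hymono.lt_iff_lt, hb, hd]
                exact hmono (by simpa [Fin.succ_lt_succ_iff] using hjk)
              have hbd' : b < d' := by
                rw [← hymono.lt_iff_lt, hb, hd']
                exact hmono (by simpa [Fin.succ_lt_succ_iff] using hjk')
              rw [← hb, ← hd, ← hd']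
              exact hytail b d d' hbd hbd'
      | succ i =>
        induction j using Fin.cases with
        | zero => exact absurd hij (by simp [Fin.lt_def])
        | succ j =>
          induction k using Fin.cases with
          | zero => exact absurd hjk (by simp [Fin.lt_def])
          | succ k =>
            induction k' using Fin.cases with
            | zero => exact absurd hjk' (by simp [Fin.lt_def])
            | succ k' =>
              simp only [Fin.cases_succ]
              exact htail i j k k' (by simpa [Fin.succ_lt_succ_iff] using hij)
                (by simpa [Fin.succ_lt_succ_iff] using hjk)
                (by simpa [Fin.succ_lt_succ_iff] using hjk')


theorem ramsey2 (c n : ℕ) : ∃ N : ℕ, ∀ f : ℕ → ℕ → Fin (c+1), ∀ S : Finset ℕ,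
    N ≤ S.card → ∃ x : Fin n → ℕ, StrictMono x ∧ (∀ i, x i ∈ S) ∧
      ∃ γ, ∀ i j : Fin n, i < j → f (x i) (x j) = γ := by
  obtain ⟨N, hN⟩ := extract2 c ((c+1) * n + 1)
  refine ⟨N, fun f S hS => ?_⟩
  obtain ⟨x, hmono, hmem, htail⟩ := hN f S hS
  have hcard : (Finset.univ : Finset (Fin (c+1))).card * n
      ≤ (Finset.univ : Finset (Fin ((c+1) * n))).card := by
    simp
  obtain ⟨γ, _, hγ⟩ := Finset.exists_le_card_fiber_of_mul_le_card_of_maps_to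
    (f := fun i : Fin ((c+1) * n) => f (x ⟨i.val, by omega⟩) (x ⟨(c+1) * n, by omega⟩))
    (fun s _ => Finset.mem_univ _) Finset.univ_nonempty hcard
  have hzmem := Finset.orderEmbOfCardLe_mem _ hγ
  set z := Finset.orderEmbOfCardLe _ hγ with hz
  refine ⟨fun i => x ⟨(z i).val, by omega⟩, ?_, fun i => hmem _, γ, ?_⟩
  · intro i j hij
    exact hmono (Fin.mk_lt_mk.mpr (z.strictMono hij))
  · intro i j hij
    have h1 : f (x ⟨(z i).val, by omega⟩) (x ⟨(z j).val, by omega⟩)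
        = f (x ⟨(z i).val, by omega⟩) (x ⟨(c+1) * n, by omega⟩) := by
      apply htail
      · exact Fin.mk_lt_mk.mpr (z.strictMono hij)
      · exact Fin.mk_lt_mk.mpr (z i).isLt
    rw [h1]
    have h2 := hzmem i
    rw [Finset.mem_filter] at h2
    exact h2.2

theorem ramsey3 (c n : ℕ) : ∃ N : ℕ, ∀ f : ℕ → ℕ → ℕ → Fin (c+1), ∀ S : Finset ℕ,
    N ≤ S.card → ∃ x : Fin n → ℕ, StrictMono x ∧ (∀ i, x i ∈ S) ∧
      ∃ γ, ∀ i j k : Fin n, i < j → j < k → f (x i) (x j) (x k) = γ := by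
  obtain ⟨M, hM⟩ := ramsey2 c n
  obtain ⟨N, hN⟩ := extract3 c (M + 1)
  refine ⟨N, fun f S hS => ?_⟩
  obtain ⟨x, hmono, hmem, htail⟩ := hN f S hS
  set last : Fin (M+1) := ⟨M, by omega⟩ with hlast
  set F : ℕ → ℕ → Fin (c+1) := fun s u => f s u (x last) with hF
  set S₂ := Finset.image (fun i : Fin M => x ⟨i.val, by omega⟩) Finset.univ with hS₂
  have hS₂card : M ≤ S₂.card := by
    rw [hS₂, Finset.card_image_of_injective, Finset.card_univ, Fintype.card_fin]
    intro i j hij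
    have := hmono.injective hij
    exact Fin.val_injective (by simpa [Fin.ext_iff] using this)
  obtain ⟨y, hymono, hymem, γ, hγ⟩ := hM F S₂ hS₂card
  have hidx : ∀ i, ∃ b : Fin (M+1), b.val < M ∧ x b = y i := by
    intro i
    have := hymem i
    rw [hS₂, Finset.mem_image] at this
    obtain ⟨b, _, hb⟩ := this
    exact ⟨⟨b.val, by omega⟩, b.isLt, hb⟩
  refine ⟨y, hymono, ?_, γ, ?_⟩
  · intro i
    obtain ⟨b, _, hb⟩ := hidx i
    rw [← hb]; exact hmem b
  · intro i j k hij hjk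
    obtain ⟨bi, hbi, hxi⟩ := hidx i
    obtain ⟨bj, hbj, hxj⟩ := hidx j
    obtain ⟨bk, hbk, hxk⟩ := hidx k
    have h1 : bi < bj := by
      rw [← hmono.lt_iff_lt, hxi, hxj]; exact hymono hij
    have h2 : bj < bk := by
      rw [← hmono.lt_iff_lt, hxj, hxk]; exact hymono hjk
    have h3 : bj < last := by simp [Fin.lt_def, hlast]; omega
    calc f (y i) (y j) (y k) = f (x bi) (x bj) (x bk) := by rw [hxi, hxj, hxk]
      _ = f (x bi) (x bj) (x last) := htail bi bj bk last h1 h2 h3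
      _ = F (y i) (y j) := by rw [hF, hxi, hxj]
      _ = γ := hγ i j hij

end DnAux



/-- The labeling of `K_t` used to obstruct perfect tilings: edges at vertex `0`
come first (ordered by the other endpoint), all other edges afterwards, ordered
by max endpoint increasing and then by min endpoint *decreasing*. -/
def gLab (t a b : ℕ) : ℕ :=
  if a = 0 ∨ b = 0 then max a b else t * max a b + (t - min a b)

lemma gLab_comm (t a b : ℕ) : gLab t a b = gLab t b a := by
  unfold gLab
  by_cases h : a = 0 ∨ b = 0
  · rw [if_pos h, if_pos (Or.symm h), max_comm]
  · rw [if_neg h, if_neg (fun hh => h (Or.symm hh)), max_comm a b, min_comm a b]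

lemma gLab_inj {t a b c d : ℕ} (hb : b < t) (hd : d < t)
    (hab : a ≠ b) (hcd : c ≠ d) (ha : a < t) (hc : c < t)
    (h : gLab t a b = gLab t c d) : (a = c ∧ b = d) ∨ (a = d ∧ b = c) := by
  unfold gLab at h
  split_ifs at h with h1 h2 h2
  · omega
  · have hle : t ≤ t * max c d := Nat.le_mul_of_pos_right t (by omega)
    omega
  · have hle : t ≤ t * max a b := Nat.le_mul_of_pos_right t (by omega)
    omega
  · have hM : max a b = max c d := by
      rcases Nat.lt_trichotomy (max a b) (max c d) with hlt | he | hlt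
      · have := Nat.mul_le_mul_left t (show max a b + 1 ≤ max c d by omega)
        rw [Nat.mul_add, Nat.mul_one] at this
        omega
      · exact he
      · have := Nat.mul_le_mul_left t (show max c d + 1 ≤ max a b by omega)
        rw [Nat.mul_add, Nat.mul_one] at this
        omega
    rw [hM] at h
    have hm : min a b = min c d := by omega
    omega

/-- The tiling-obstructing edge-ordered complete graph on `Fin t`. -/
noncomputable def badK (t : ℕ) : EdgeOrderedGraph (Fin t) where
  graph := ⊤
  label := Sym2.lift ⟨fun a b => ((gLab t a.val b.val : ℕ) : ℝ),
    fun a b => by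
      show ((gLab t a.val b.val : ℕ) : ℝ) = ((gLab t b.val a.val : ℕ) : ℝ)
      rw [gLab_comm]⟩
  inj := by
    intro e₁ h₁ e₂ h₂ heq
    induction e₁ using Sym2.ind with
    | _ a b =>
    induction e₂ using Sym2.ind with
    | _ c d =>
    rw [SimpleGraph.mem_edgeSet] at h₁ h₂
    simp only [SimpleGraph.top_adj] at h₁ h₂
    simp only [Sym2.lift_mk] at heq
    have h : gLab t a.val b.val = gLab t c.val d.val := Nat.cast_injective heq
    have key := gLab_inj b.isLt d.isLt (fun hh => h₁ (Fin.val_injective hh))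
      (fun hh => h₂ (Fin.val_injective hh)) a.isLt c.isLt h
    rw [Sym2.eq_iff]
    rcases key with ⟨x, y⟩ | ⟨x, y⟩
    · exact Or.inl ⟨Fin.val_injective x, Fin.val_injective y⟩
    · exact Or.inr ⟨Fin.val_injective x, Fin.val_injective y⟩

lemma badK_label (t : ℕ) (a b : Fin t) :
    (badK t).label s(a, b) = ((gLab t a.val b.val : ℕ) : ℝ) := by
  simp [badK]

theorem not_tileable_of_isDn (n : ℕ) (hn : 4 ≤ n) (G : EdgeOrderedGraph (Fin n))
    (hG : IsDn n G) : ¬ Tileable G := by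
  rintro ⟨t, ht0, -, hall⟩
  obtain ⟨T, hcopy, -, hcover⟩ := hall (badK t) rfl
  obtain ⟨⟨φ, mm⟩, ⟨hT, hφm⟩, -⟩ := hcover ⟨0, ht0⟩ (Set.mem_univ _)
  have hφm' : φ mm = ⟨0, ht0⟩ := hφm
  obtain ⟨hinj, hadj, hord⟩ := hcopy φ hT
  set u1 : Fin n := ⟨0, by omega⟩ with hu1
  set un : Fin n := ⟨n - 1, by omega⟩ with hun
  set m1 : Fin n := ⟨1, by omega⟩ with hm1
  set m2 : Fin n := ⟨2, by omega⟩ with hm2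
  have hadjG : ∀ a b : Fin n, a.val ≠ b.val →
      (a.val = 0 ∨ b.val = 0 ∨ a.val = n - 1 ∨ b.val = n - 1) → G.graph.Adj a b := by
    intro a b h1 h2
    exact (hG.1 a b).mpr ⟨fun hh => h1 (by rw [hh]), h2⟩
  have ha1 : G.graph.Adj u1 m1 := hadjG _ _ (show (0:ℕ) ≠ 1 by omega) (Or.inl rfl)
  have ha2 : G.graph.Adj u1 m2 := hadjG _ _ (show (0:ℕ) ≠ 2 by omega) (Or.inl rfl)
  have ha3 : G.graph.Adj u1 un := hadjG _ _ (show (0:ℕ) ≠ n - 1 by omega) (Or.inl rfl)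
  have ha4 : G.graph.Adj m1 un := hadjG _ _ (show (1:ℕ) ≠ n - 1 by omega)
    (show _ ∨ _ ∨ _ ∨ (n-1:ℕ) = n - 1 by right; right; right; rfl)
  have ha5 : G.graph.Adj m2 un := hadjG _ _ (show (2:ℕ) ≠ n - 1 by omega)
    (show _ ∨ _ ∨ _ ∨ (n-1:ℕ) = n - 1 by right; right; right; rfl)
  have hcast : ((n - 1 : ℕ) : ℝ) = (n : ℝ) - 1 := by
    push_cast [Nat.cast_sub (by omega : 1 ≤ n)]; ring
  have hd1 : dnLabel n 0 1 < dnLabel n 0 2 := by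
    unfold dnLabel
    rw [if_pos (Or.inl rfl), if_pos (Or.inl rfl), Nat.cast_lt]
    omega
  have hd2 : dnLabel n 0 2 < dnLabel n 0 (n - 1) := by
    unfold dnLabel
    rw [if_pos (Or.inl rfl), if_pos (Or.inl rfl), Nat.cast_lt]
    omega
  have hd4 : dnLabel n 1 (n - 1) < dnLabel n 2 (n - 1) := by
    unfold dnLabel
    rw [if_neg (by omega), if_neg (by omega)]
    have e1 : min 1 (n - 1) = 1 := by omega
    have e2 : min 2 (n - 1) = 2 := by omega
    rw [e1, e2]
    push_cast
    linarith
  have key : ∀ a b c d : Fin n, G.graph.Adj a b → G.graph.Adj c d →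
      dnLabel n a.val b.val < dnLabel n c.val d.val →
      gLab t (φ a).val (φ b).val < gLab t (φ c).val (φ d).val := by
    intro a b c d h1 h2 h3
    have := hord a b c d h1 h2 ((hG.2 a b c d h1 h2).mpr h3)
    rw [badK_label, badK_label] at this
    exact_mod_cast this
  have hbig : ∀ a b : Fin t, a.val ≠ 0 → b.val ≠ 0 → ∀ u v : ℕ, (u = 0 ∨ v = 0) →
      u < t → v < t → ¬ (gLab t a.val b.val < gLab t u v) := by
    intro a b ha hb u v huv hu hv
    unfold gLab
    rw [if_neg (by omega), if_pos huv]
    have h1 : t ≤ t * max a.val b.val := Nat.le_mul_of_pos_right t (by omega)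
    have h2 : max u v < t := by omega
    have h3 : min a.val b.val < t := by have := a.isLt; omega
    omega
  have hφne : ∀ i : Fin n, i ≠ mm → (φ i).val ≠ 0 := by
    intro i hi hiv
    exact hi (hinj (by rw [hφm']; exact Fin.val_injective hiv))
  rcases Nat.lt_trichotomy mm.val 0 with hc | hc | hc
  · omega
  · -- mm = u1 : vertex 0 of K_t is the small center of its copy
    have hmm : mm = u1 := Fin.val_injective (by rw [hc])
    rw [hmm] at hφm'
    have hA := key u1 m1 u1 m2 ha1 ha2 hd1
    have hB := key u1 m2 u1 un ha2 ha3 hd2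
    have hC := key m1 un m2 un ha4 ha5 hd4
    rw [hφm'] at hA hB
    have ha : (φ m1).val ≠ 0 := hφne m1 (by
      rw [hmm]; exact fun hh => (show (1:ℕ) ≠ 0 by omega) (congrArg Fin.val hh))
    have hb : (φ m2).val ≠ 0 := hφne m2 (by
      rw [hmm]; exact fun hh => (show (2:ℕ) ≠ 0 by omega) (congrArg Fin.val hh))
    have hy : (φ un).val ≠ 0 := hφne un (by
      rw [hmm]; exact fun hh => (show (n-1:ℕ) ≠ 0 by omega) (congrArg Fin.val hh))
    have hz0 : (⟨0, ht0⟩ : Fin t).val = 0 := rfl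
    unfold gLab at hA hB hC
    rw [hz0] at hA hB
    rw [if_pos (Or.inl rfl), if_pos (Or.inl rfl)] at hA hB
    rw [if_neg (by omega), if_neg (by omega)] at hC
    have hab : (φ m1).val < (φ m2).val := by omega
    have hby : (φ m2).val < (φ un).val := by omega
    rw [Nat.max_eq_right (by omega : (φ m1).val ≤ (φ un).val),
      Nat.max_eq_right (by omega : (φ m2).val ≤ (φ un).val),
      Nat.min_eq_left (by omega : (φ m1).val ≤ (φ un).val),
      Nat.min_eq_left (by omega : (φ m2).val ≤ (φ un).val)] at hC
    have hKle : t * (φ un).val ≤ t * (φ un).val := le_refl _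
    omega
  · by_cases hcn : mm.val = n - 1
    · -- mm = un : vertex 0 of K_t is the large center of its copy
      have hmm : mm = un := Fin.val_injective (by rw [hcn])
      rw [hmm] at hφm'
      have hA := key u1 m1 u1 un ha1 ha3 (lt_trans hd1 hd2)
      rw [hφm'] at hA
      have h1 : (φ u1).val ≠ 0 := hφne u1 (by
        rw [hmm]; exact fun hh => (show (0:ℕ) ≠ n - 1 by omega) (congrArg Fin.val hh))
      have h2 : (φ m1).val ≠ 0 := hφne m1 (by
        rw [hmm]; exact fun hh => (show (1:ℕ) ≠ n - 1 by omega) (congrArg Fin.val hh))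
      exact hbig _ _ h1 h2 _ _ (Or.inr rfl) (φ u1).isLt (by omega) hA
    · -- mm is a middle vertex of its copy
      have hadjm : G.graph.Adj mm un := hadjG _ _ (show mm.val ≠ n - 1 from hcn)
        (show _ ∨ _ ∨ _ ∨ (n-1:ℕ) = n - 1 by right; right; right; rfl)
      have hdm : dnLabel n 0 (n - 1) < dnLabel n mm.val (n - 1) := by
        unfold dnLabel
        rw [if_pos (Or.inl rfl), if_neg (by omega)]
        have e1 : max 0 (n - 1) = n - 1 := by omega
        have e2 : (1 : ℝ) ≤ ((min mm.val (n - 1) : ℕ) : ℝ) := by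
          exact_mod_cast (by omega : 1 ≤ min mm.val (n - 1))
        rw [e1, hcast]
        linarith
      have hA := key u1 un mm un ha3 hadjm hdm
      rw [hφm'] at hA
      have h1 : (φ u1).val ≠ 0 := hφne u1
        (fun hh => (show (0:ℕ) ≠ mm.val by omega) (congrArg Fin.val hh))
      have h2 : (φ un).val ≠ 0 := hφne un
        (fun hh => (show (n-1:ℕ) ≠ mm.val by omega) (congrArg Fin.val hh))
      exact hbig _ _ h1 h2 _ _ (Or.inl rfl) ht0 (φ un).isLt hA


/-- The order type of a triple of labels, as one of six patterns. -/
noncomputable def pat (p q r : ℝ) : Fin 6 :=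
  if p < q then (if q < r then 0 else if p < r then 1 else 2)
  else (if r < q then 5 else if r < p then 4 else 3)

lemma pat_eq_zero {p q r : ℝ} (h : pat p q r = 0) : p < q ∧ q < r := by
  unfold pat at h
  split_ifs at h <;> first
    | exact ⟨‹_›, ‹_›⟩
    | exact absurd h (by decide)

lemma pat_eq_one {p q r : ℝ} (hqr : q ≠ r) (h : pat p q r = 1) : p < r ∧ r < q := by
  unfold pat at h
  split_ifs at h with h1 h2 h3 <;> first
    | exact ⟨h3, lt_of_le_of_ne (not_lt.mp h2) hqr.symm⟩
    | exact absurd h (by decide)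

lemma pat_eq_two {p q r : ℝ} (hpr : p ≠ r) (h : pat p q r = 2) : r < p ∧ p < q := by
  unfold pat at h
  split_ifs at h with h1 h2 h3 <;> first
    | exact ⟨lt_of_le_of_ne (not_lt.mp h3) hpr.symm, h1⟩
    | exact absurd h (by decide)

lemma pat_eq_three {p q r : ℝ} (hpq : p ≠ q) (hpr : p ≠ r) (h : pat p q r = 3) :
    q < p ∧ p < r := by
  unfold pat at h
  split_ifs at h with h1 h2 h3 h4 h5 <;> first
    | exact ⟨lt_of_le_of_ne (not_lt.mp h1) hpq.symm, lt_of_le_of_ne (not_lt.mp h5) hpr⟩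
    | exact absurd h (by decide)

lemma pat_eq_four {p q r : ℝ} (hqr : q ≠ r) (h : pat p q r = 4) : q < r ∧ r < p := by
  unfold pat at h
  split_ifs at h with h1 h2 h3 h4 h5 <;> first
    | exact ⟨lt_of_le_of_ne (not_lt.mp h4) hqr, h5⟩
    | exact absurd h (by decide)

lemma pat_eq_five {p q r : ℝ} (hpq : p ≠ q) (h : pat p q r = 5) : r < q ∧ q < p := by
  unfold pat at h
  split_ifs at h with h1 h2 h3 h4 h5 <;> first
    | exact ⟨h4, lt_of_le_of_ne (not_lt.mp h1) hpq.symm⟩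
    | exact absurd h (by decide)

lemma dnLabel_symm (n u v : ℕ) : dnLabel n u v = dnLabel n v u := by
  unfold dnLabel
  by_cases h : u = 0 ∨ v = 0
  · rw [if_pos h, if_pos (Or.symm h), max_comm]
  · rw [if_neg h, if_neg (fun hh => h (Or.symm hh)), min_comm]

/-- Assembly: the two monotonicity families suffice for a copy of `D_n`. -/
lemma isCopy_of {n : ℕ} (hn : 4 ≤ n) (G : EdgeOrderedGraph (Fin n)) (hG : IsDn n G)
    {t : ℕ} (H : EdgeOrderedGraph (Fin t)) (hH : H.graph = ⊤)
    (φ : Fin n → Fin t) (hinj : Function.Injective φ)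
    (hA : ∀ i j : Fin n, 0 < i.val → i.val < j.val →
      H.label s(φ ⟨0, by omega⟩, φ i) < H.label s(φ ⟨0, by omega⟩, φ j))
    (hB : ∀ i j : Fin n, i.val < j.val → j.val < n - 1 →
      H.label s(φ i, φ ⟨n - 1, by omega⟩) < H.label s(φ j, φ ⟨n - 1, by omega⟩)) :
    IsCopy G H φ := by
  have h0n : 0 < n := by omega
  have h1n : n - 1 < n := by omega
  have hcast : ((n - 1 : ℕ) : ℝ) = (n : ℝ) - 1 := by
    push_cast [Nat.cast_sub (by omega : 1 ≤ n)]; ring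
  have hdn1 : ∀ u v : ℕ, u = 0 → dnLabel n u v = (v : ℝ) := by
    intro u v hu
    unfold dnLabel
    rw [if_pos (Or.inl hu), hu]
    simp
  have hdn2 : ∀ u v : ℕ, u ≠ 0 → v ≠ 0 → u ≤ v → dnLabel n u v = (n : ℝ) - 1 + u := by
    intro u v hu hv huv
    unfold dnLabel
    rw [if_neg (by omega), Nat.min_eq_left huv]
  refine ⟨hinj, ?_, ?_⟩
  · intro a b hab
    rw [hH]
    simp only [SimpleGraph.top_adj]
    exact fun hc => ((hG.1 a b).mp hab).1 (hinj hc)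
  · have key : ∀ a b c d : Fin n, a.val < b.val → c.val < d.val →
        (a.val = 0 ∨ b.val = n - 1) → (c.val = 0 ∨ d.val = n - 1) →
        dnLabel n a.val b.val < dnLabel n c.val d.val →
        H.label s(φ a, φ b) < H.label s(φ c, φ d) := by
      intro a b c d hab hcd hcnd1 hcnd2 hlt
      have hbn : b.val < n := b.isLt
      have hdnn : d.val < n := d.isLt
      rcases hcnd1 with h1 | h1
      · have ha0 : a = ⟨0, h0n⟩ := Fin.ext h1
        rcases hcnd2 with h2 | h2
        · -- both edges start at the center 0
          have hc0 : c = ⟨0, h0n⟩ := Fin.ext h2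
          have hbd : b.val < d.val := by
            rw [hdn1 a.val b.val h1, hdn1 c.val d.val h2, Nat.cast_lt] at hlt
            exact hlt
          subst ha0 hc0
          exact hA b d (by omega) hbd
        · -- first edge at 0, second edge at n-1
          have hdl : d = ⟨n - 1, h1n⟩ := Fin.ext h2
          by_cases hb' : b.val = n - 1
          · -- the first edge is the bridge (0, n-1)
            have hc0 : 0 < c.val := by
              by_contra hcc
              push_neg at hcc
              have hc0' : c.val = 0 := by omega
              rw [hdn1 a.val b.val h1, hdn1 c.val d.val hc0', hb', h2] at hlt
              exact lt_irrefl _ hlt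
            have hbl : b = ⟨n - 1, h1n⟩ := Fin.ext hb'
            subst ha0 hbl hdl
            exact hB ⟨0, h0n⟩ c hc0 (by omega)
          · by_cases hc' : c.val = 0
            · -- second edge is the bridge (0, n-1)
              have hcc : c = ⟨0, h0n⟩ := Fin.ext hc'
              subst ha0 hcc hdl
              exact hA b ⟨n - 1, h1n⟩ (by omega) (by omega)
            · -- chain through the bridge
              have step1 := hA b ⟨n - 1, h1n⟩ (by omega) (by omega)
              have step2 := hB ⟨0, h0n⟩ c (by omega) (by omega)
              subst ha0 hdl
              exact lt_trans step1 step2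
      · -- first edge ends at n-1
        have hbl : b = ⟨n - 1, h1n⟩ := Fin.ext h1
        rcases hcnd2 with h2 | h2
        · -- second edge starts at 0 : impossible unless first is the bridge
          by_cases ha' : a.val = 0
          · -- bridge vs (0, d) : dnLabel forces n-1 < d.val < n, impossible
            exfalso
            rw [hdn1 a.val b.val ha', hdn1 c.val d.val h2, h1, Nat.cast_lt] at hlt
            omega
          · exfalso
            rw [hdn2 a.val b.val ha' (by omega) (le_of_lt hab),
              hdn1 c.val d.val h2] at hlt
            have : ((n - 1 + a.val : ℕ) : ℝ) < (d.val : ℝ) := by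
              push_cast
              rw [hcast]  -- no-op safe?
              linarith [hlt]
            rw [Nat.cast_lt] at this
            omega
        · -- both edges end at n-1
          have hdl : d = ⟨n - 1, h1n⟩ := Fin.ext h2
          by_cases hc' : c.val = 0
          · -- second is the bridge: then first must be smaller: impossible
            exfalso
            by_cases ha' : a.val = 0
            · rw [hdn1 a.val b.val ha', hdn1 c.val d.val hc', h1, h2] at hlt
              exact lt_irrefl _ hlt
            · rw [hdn2 a.val b.val ha' (by omega) (le_of_lt hab),
                hdn1 c.val d.val hc', h2] at hlt
              have : ((n - 1 : ℕ) : ℝ) < (n : ℝ) - 1 + (a.val : ℝ) := by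
                have ha1 : (1 : ℝ) ≤ (a.val : ℝ) := by
                  exact_mod_cast (by omega : 1 ≤ a.val)
                linarith
              rw [hcast] at hlt
              have ha1 : (1 : ℝ) ≤ (a.val : ℝ) := by
                exact_mod_cast (by omega : 1 ≤ a.val)
              linarith
          · by_cases ha' : a.val = 0
            · -- first is the bridge
              have haa : a = ⟨0, h0n⟩ := Fin.ext ha'
              subst haa hbl hdl
              exact hB ⟨0, h0n⟩ c (by omega) (by omega)
            · -- two side edges at n-1
              have hac : a.val < c.val := by
                rw [hdn2 a.val b.val ha' (by omega) (le_of_lt hab),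
                  hdn2 c.val d.val hc' (by omega) (le_of_lt hcd)] at hlt
                have : (a.val : ℝ) < (c.val : ℝ) := by linarith
                exact_mod_cast this
              subst hbl hdl
              exact hB a c hac (by omega)
    intro a b c d hab hcd hlt
    rw [hG.2 a b c d hab hcd] at hlt
    obtain ⟨hne1, hcond1⟩ := (hG.1 a b).mp hab
    obtain ⟨hne2, hcond2⟩ := (hG.1 c d).mp hcd
    have hvne1 : a.val ≠ b.val := fun h => hne1 (Fin.val_injective h)
    have hvne2 : c.val ≠ d.val := fun h => hne2 (Fin.val_injective h)
    have hred : ∀ x y : Fin n, x.val < y.val →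
        (x.val = 0 ∨ y.val = 0 ∨ x.val = n - 1 ∨ y.val = n - 1) →
        (x.val = 0 ∨ y.val = n - 1) := by
      intro x y hxy hc
      have := y.isLt
      omega
    rcases Nat.lt_or_ge a.val b.val with hab' | hab'
    · rcases Nat.lt_or_ge c.val d.val with hcd' | hcd'
      · exact key a b c d hab' hcd' (hred a b hab' hcond1) (hred c d hcd' hcond2) hlt
      · have hcd'' : d.val < c.val := by omega
        rw [dnLabel_symm n c.val d.val] at hlt
        rw [show (s(φ c, φ d) : Sym2 (Fin t)) = s(φ d, φ c) from Sym2.eq_swap]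
        exact key a b d c hab' hcd'' (hred a b hab' hcond1)
          (hred d c hcd'' (by omega)) hlt
    · have hab'' : b.val < a.val := by omega
      rw [dnLabel_symm n a.val b.val] at hlt
      rw [show (s(φ a, φ b) : Sym2 (Fin t)) = s(φ b, φ a) from Sym2.eq_swap]
      rcases Nat.lt_or_ge c.val d.val with hcd' | hcd'
      · exact key b a c d hab'' hcd' (hred b a hab'' (by omega)) (hred c d hcd' hcond2) hlt
      · have hcd'' : d.val < c.val := by omega
        rw [dnLabel_symm n c.val d.val] at hlt
        rw [show (s(φ c, φ d) : Sym2 (Fin t)) = s(φ d, φ c) from Sym2.eq_swap]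
        exact key b a d c hab'' hcd'' (hred b a hab'' (by omega))
          (hred d c hcd'' (by omega)) hlt


set_option maxHeartbeats 2000000 in
theorem turanable_of_isDn (n : ℕ) (hn : 4 ≤ n) (G : EdgeOrderedGraph (Fin n))
    (hG : IsDn n G) : Turanable G := by
  classical
  obtain ⟨N, hN⟩ := DnAux.ramsey3 5 n
  refine ⟨N, fun H hH => ?_⟩
  have h0n : 0 < n := by omega
  have h1n : n - 1 < n := by omega
  obtain ⟨x, hmono, hmem, γ, hγ⟩ := hN
    (fun a b c =>
      if h : a < N ∧ b < N ∧ c < N then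
        pat (H.label s(⟨a, h.1⟩, ⟨b, h.2.1⟩)) (H.label s(⟨a, h.1⟩, ⟨c, h.2.2⟩))
          (H.label s(⟨b, h.2.1⟩, ⟨c, h.2.2⟩))
      else 0) (Finset.range N) (by simp)
  have hxlt : ∀ i, x i < N := fun i => Finset.mem_range.mp (hmem i)
  set w : Fin n → Fin N := fun i => ⟨x i, hxlt i⟩ with hw
  have hwmono : StrictMono w := fun i j hij => Fin.mk_lt_mk.mpr (hmono hij)
  have hwinj : Function.Injective w := hwmono.injective
  set L2 : Fin n → Fin n → ℝ := fun i j => H.label s(w i, w j) with hL2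
  have hL2symm : ∀ i j, L2 i j = L2 j i := by
    intro i j
    simp only [hL2]
    rw [Sym2.eq_swap]
  have hpat : ∀ i j k : Fin n, i < j → j < k → pat (L2 i j) (L2 i k) (L2 j k) = γ := by
    intro i j k hij hjk
    have h := hγ i j k hij hjk
    rw [dif_pos (show x i < N ∧ x j < N ∧ x k < N from ⟨hxlt i, hxlt j, hxlt k⟩)] at h
    exact h
  have hLne : ∀ i j k l : Fin n, i ≠ j → k ≠ l → ¬(i = k ∧ j = l) → ¬(i = l ∧ j = k) →
      L2 i j ≠ L2 k l := by
    intro i j k l h1 h2 h3 h4 heq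
    have hedge : ∀ u v : Fin n, u ≠ v → (s(w u, w v) : Sym2 (Fin N)) ∈ H.graph.edgeSet := by
      intro u v huv
      rw [SimpleGraph.mem_edgeSet, hH]
      simp only [SimpleGraph.top_adj]
      exact fun hc => huv (hwinj hc)
    have := H.inj _ (hedge i j h1) _ (hedge k l h2) heq
    rw [Sym2.eq_iff] at this
    rcases this with ⟨e1, e2⟩ | ⟨e1, e2⟩
    · exact h3 ⟨hwinj e1, hwinj e2⟩
    · exact h4 ⟨hwinj e1, hwinj e2⟩
  have hne_pq : ∀ i j k : Fin n, i < j → j < k → L2 i j ≠ L2 i k := by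
    intro i j k hij hjk
    exact hLne i j i k (ne_of_lt hij) (ne_of_lt (lt_trans hij hjk))
      (fun h => (ne_of_lt hjk) h.2) (fun h => (ne_of_lt (lt_trans hij hjk)) h.1)
  have hne_pr : ∀ i j k : Fin n, i < j → j < k → L2 i j ≠ L2 j k := by
    intro i j k hij hjk
    exact hLne i j j k (ne_of_lt hij) (ne_of_lt hjk)
      (fun h => (ne_of_lt hij) h.1) (fun h => (ne_of_lt (lt_trans hij hjk)) h.1)
  have hne_qr : ∀ i j k : Fin n, i < j → j < k → L2 i k ≠ L2 j k := by
    intro i j k hij hjk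
    exact hLne i k j k (ne_of_lt (lt_trans hij hjk)) (ne_of_lt hjk)
      (fun h => (ne_of_lt hij) h.1) (fun h => (ne_of_lt (lt_trans hij hjk)) h.1)
  rcases γ with ⟨gv, hgv⟩
  interval_cases gv
  · -- pattern 0 : p < q < r
    have hch : ∀ i j k : Fin n, i < j → j < k → L2 i j < L2 i k ∧ L2 i k < L2 j k :=
      fun i j k hij hjk => pat_eq_zero (hpat i j k hij hjk)
    refine ⟨w, isCopy_of hn G hG H hH w hwinj ?_ ?_⟩
    · intro i j h0 hij
      exact (hch ⟨0, h0n⟩ i j (Fin.lt_def.mpr h0) (Fin.lt_def.mpr hij)).1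
    · intro i j hij hj
      exact (hch i j ⟨n - 1, h1n⟩ (Fin.lt_def.mpr hij) (Fin.lt_def.mpr hj)).2
  · -- pattern 1 : p < r < q
    have hch : ∀ i j k : Fin n, i < j → j < k → L2 i j < L2 j k ∧ L2 j k < L2 i k :=
      fun i j k hij hjk => pat_eq_one (hne_qr i j k hij hjk) (hpat i j k hij hjk)
    set φ : Fin n → Fin N :=
      fun i => if i.val = n - 1 then w i else w ⟨n - 2 - i.val, by omega⟩ with hφ
    have v1 : ∀ i : Fin n, i.val = n - 1 → φ i = w i := by
      intro i hi
      simp only [hφ]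
      rw [if_pos hi]
    have v2 : ∀ i : Fin n, i.val < n - 1 → φ i = w ⟨n - 2 - i.val, by omega⟩ := by
      intro i hi
      simp only [hφ]
      rw [if_neg (by omega)]
    have e0 : φ ⟨0, h0n⟩ = w ⟨n - 2, by omega⟩ := v2 ⟨0, h0n⟩ (show (0:ℕ) < n - 1 by omega)
    have elast : φ ⟨n - 1, h1n⟩ = w ⟨n - 1, h1n⟩ := v1 _ rfl
    have hinj : Function.Injective φ := by
      intro i j h
      by_cases hi : i.val = n - 1 <;> by_cases hj : j.val = n - 1
      · exact Fin.ext (by omega)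
      · rw [v1 i hi, v2 j (by have := j.isLt; omega)] at h
        have hv := congrArg Fin.val (hwinj h)
        simp only [Fin.val_mk] at hv
        exact absurd hv (by omega)
      · rw [v2 i (by have := i.isLt; omega), v1 j hj] at h
        have hv := congrArg Fin.val (hwinj h)
        simp only [Fin.val_mk] at hv
        exact absurd hv (by omega)
      · rw [v2 i (by have := i.isLt; omega), v2 j (by have := j.isLt; omega)] at h
        have hv := congrArg Fin.val (hwinj h)
        simp only [Fin.val_mk] at hv
        have hi' := i.isLt
        have hj' := j.isLt
        exact Fin.ext (by omega)
    refine ⟨φ, isCopy_of hn G hG H hH φ hinj ?_ ?_⟩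
    · intro i j h0 hij
      have hjn := j.isLt
      rw [e0, v2 i (by omega)]
      by_cases hj : j.val = n - 1
      · rw [v1 j hj]
        show L2 ⟨n - 2, by omega⟩ ⟨n - 2 - i.val, by omega⟩ < L2 ⟨n - 2, by omega⟩ j
        rw [hL2symm ⟨n - 2, by omega⟩ ⟨n - 2 - i.val, by omega⟩]
        exact (hch ⟨n - 2 - i.val, by omega⟩ ⟨n - 2, by omega⟩ j
          (Fin.mk_lt_mk.mpr (by omega)) (Fin.lt_def.mpr (show n - 2 < j.val by omega))).1
      · rw [v2 j (by omega)]
        show L2 ⟨n - 2, by omega⟩ ⟨n - 2 - i.val, by omega⟩ <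
          L2 ⟨n - 2, by omega⟩ ⟨n - 2 - j.val, by omega⟩
        rw [hL2symm ⟨n - 2, by omega⟩ ⟨n - 2 - i.val, by omega⟩,
          hL2symm ⟨n - 2, by omega⟩ ⟨n - 2 - j.val, by omega⟩]
        exact (hch ⟨n - 2 - j.val, by omega⟩ ⟨n - 2 - i.val, by omega⟩ ⟨n - 2, by omega⟩
          (Fin.mk_lt_mk.mpr (by omega)) (Fin.mk_lt_mk.mpr (by omega))).2
    · intro i j hij hj
      rw [elast, v2 i (by omega), v2 j hj]
      show L2 ⟨n - 2 - i.val, by omega⟩ ⟨n - 1, h1n⟩ < L2 ⟨n - 2 - j.val, by omega⟩ ⟨n - 1, h1n⟩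
      exact (hch ⟨n - 2 - j.val, by omega⟩ ⟨n - 2 - i.val, by omega⟩ ⟨n - 1, h1n⟩
        (Fin.mk_lt_mk.mpr (by omega)) (Fin.mk_lt_mk.mpr (by omega))).2
  · -- pattern 2 : r < p < q
    have hch : ∀ i j k : Fin n, i < j → j < k → L2 j k < L2 i j ∧ L2 i j < L2 i k :=
      fun i j k hij hjk => pat_eq_two (hne_pr i j k hij hjk) (hpat i j k hij hjk)
    set φ : Fin n → Fin N :=
      fun i => if h : i.val = n - 1 then w ⟨0, h0n⟩ else w ⟨i.val + 1, by omega⟩ with hφ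
    have v1 : ∀ i : Fin n, i.val = n - 1 → φ i = w ⟨0, h0n⟩ := by
      intro i hi
      simp only [hφ]
      rw [dif_pos hi]
    have v2 : ∀ (i : Fin n) (_h2 : i.val < n - 1), φ i = w ⟨i.val + 1, by omega⟩ := by
      intro i hi
      simp only [hφ]
      rw [dif_neg (by omega)]
    have e0 : φ ⟨0, h0n⟩ = w ⟨1, by omega⟩ := v2 ⟨0, h0n⟩ (show (0:ℕ) < n - 1 by omega)
    have elast : φ ⟨n - 1, h1n⟩ = w ⟨0, h0n⟩ := v1 _ rfl
    have hinj : Function.Injective φ := by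
      intro i j h
      by_cases hi : i.val = n - 1 <;> by_cases hj : j.val = n - 1
      · exact Fin.ext (by omega)
      · rw [v1 i hi, v2 j (by have := j.isLt; omega)] at h
        have hv := congrArg Fin.val (hwinj h)
        simp only [Fin.val_mk] at hv
        exact absurd hv (by omega)
      · rw [v2 i (by have := i.isLt; omega), v1 j hj] at h
        have hv := congrArg Fin.val (hwinj h)
        simp only [Fin.val_mk] at hv
        exact absurd hv (by omega)
      · rw [v2 i (by have := i.isLt; omega), v2 j (by have := j.isLt; omega)] at h
        have hv := congrArg Fin.val (hwinj h)
        simp only [Fin.val_mk] at hv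
        exact Fin.ext (by omega)
    refine ⟨φ, isCopy_of hn G hG H hH φ hinj ?_ ?_⟩
    · intro i j h0 hij
      have hjn := j.isLt
      rw [e0, v2 i (by omega)]
      by_cases hj : j.val = n - 1
      · rw [v1 j hj]
        show L2 ⟨1, by omega⟩ ⟨i.val + 1, by omega⟩ < L2 ⟨1, by omega⟩ ⟨0, h0n⟩
        rw [hL2symm ⟨1, by omega⟩ ⟨0, h0n⟩]
        exact (hch ⟨0, h0n⟩ ⟨1, by omega⟩ ⟨i.val + 1, by omega⟩
          (Fin.mk_lt_mk.mpr (by omega)) (Fin.mk_lt_mk.mpr (by omega))).1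
      · rw [v2 j (by omega)]
        show L2 ⟨1, by omega⟩ ⟨i.val + 1, by omega⟩ < L2 ⟨1, by omega⟩ ⟨j.val + 1, by omega⟩
        exact (hch ⟨1, by omega⟩ ⟨i.val + 1, by omega⟩ ⟨j.val + 1, by omega⟩
          (Fin.mk_lt_mk.mpr (by omega)) (Fin.mk_lt_mk.mpr (by omega))).2
    · intro i j hij hj
      rw [elast, v2 i (by omega), v2 j hj]
      show L2 ⟨i.val + 1, by omega⟩ ⟨0, h0n⟩ < L2 ⟨j.val + 1, by omega⟩ ⟨0, h0n⟩
      rw [hL2symm ⟨i.val + 1, by omega⟩ ⟨0, h0n⟩, hL2symm ⟨j.val + 1, by omega⟩ ⟨0, h0n⟩]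
      exact (hch ⟨0, h0n⟩ ⟨i.val + 1, by omega⟩ ⟨j.val + 1, by omega⟩
        (Fin.mk_lt_mk.mpr (by omega)) (Fin.mk_lt_mk.mpr (by omega))).2
  · -- pattern 3 : q < p < r
    have hch : ∀ i j k : Fin n, i < j → j < k → L2 i k < L2 i j ∧ L2 i j < L2 j k :=
      fun i j k hij hjk => pat_eq_three (hne_pq i j k hij hjk) (hne_pr i j k hij hjk)
        (hpat i j k hij hjk)
    set φ : Fin n → Fin N :=
      fun i => if h0 : i.val = 0 then w ⟨0, h0n⟩ else if h1 : i.val = n - 1 then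
        w ⟨1, by omega⟩ else w ⟨n - i.val, by omega⟩ with hφ
    have v0 : ∀ i : Fin n, i.val = 0 → φ i = w ⟨0, h0n⟩ := by
      intro i hi
      simp only [hφ]
      rw [dif_pos hi]
    have v1 : ∀ i : Fin n, i.val = n - 1 → φ i = w ⟨1, by omega⟩ := by
      intro i hi
      simp only [hφ]
      rw [dif_neg (by omega), dif_pos hi]
    have v2 : ∀ (i : Fin n) (_h1 : 0 < i.val) (_h2 : i.val < n - 1), φ i = w ⟨n - i.val, by omega⟩ := by
      intro i hi1 hi2
      simp only [hφ]
      rw [dif_neg (by omega), dif_neg (by omega)]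
    have e0 : φ ⟨0, h0n⟩ = w ⟨0, h0n⟩ := v0 _ rfl
    have elast : φ ⟨n - 1, h1n⟩ = w ⟨1, by omega⟩ := v1 _ rfl
    have hinj : Function.Injective φ := by
      intro i j h
      have hin := i.isLt
      have hjn := j.isLt
      by_cases hi0 : i.val = 0 <;> by_cases hj0 : j.val = 0
      · exact Fin.ext (by omega)
      · by_cases hj1 : j.val = n - 1
        · rw [v0 i hi0, v1 j hj1] at h
          have hv := congrArg Fin.val (hwinj h)
          simp only [Fin.val_mk] at hv
          exact absurd hv (by omega)
        · rw [v0 i hi0, v2 j (by omega) (by omega)] at h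
          have hv := congrArg Fin.val (hwinj h)
          simp only [Fin.val_mk] at hv
          exact absurd hv (by omega)
      · by_cases hi1 : i.val = n - 1
        · rw [v1 i hi1, v0 j hj0] at h
          have hv := congrArg Fin.val (hwinj h)
          simp only [Fin.val_mk] at hv
          exact absurd hv (by omega)
        · rw [v2 i (by omega) (by omega), v0 j hj0] at h
          have hv := congrArg Fin.val (hwinj h)
          simp only [Fin.val_mk] at hv
          exact absurd hv (by omega)
      · by_cases hi1 : i.val = n - 1 <;> by_cases hj1 : j.val = n - 1
        · exact Fin.ext (by omega)
        · rw [v1 i hi1, v2 j (by omega) (by omega)] at h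
          have hv := congrArg Fin.val (hwinj h)
          simp only [Fin.val_mk] at hv
          exact absurd hv (by omega)
        · rw [v2 i (by omega) (by omega), v1 j hj1] at h
          have hv := congrArg Fin.val (hwinj h)
          simp only [Fin.val_mk] at hv
          exact absurd hv (by omega)
        · rw [v2 i (by omega) (by omega), v2 j (by omega) (by omega)] at h
          have hv := congrArg Fin.val (hwinj h)
          simp only [Fin.val_mk] at hv
          exact Fin.ext (by omega)
    refine ⟨φ, isCopy_of hn G hG H hH φ hinj ?_ ?_⟩
    · intro i j h0 hij
      have hjn := j.isLt
      rw [e0, v2 i (by omega) (by omega)]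
      by_cases hj : j.val = n - 1
      · rw [v1 j hj]
        show L2 ⟨0, h0n⟩ ⟨n - i.val, by omega⟩ < L2 ⟨0, h0n⟩ ⟨1, by omega⟩
        exact (hch ⟨0, h0n⟩ ⟨1, by omega⟩ ⟨n - i.val, by omega⟩
          (Fin.mk_lt_mk.mpr (by omega)) (Fin.mk_lt_mk.mpr (by omega))).1
      · rw [v2 j (by omega) (by omega)]
        show L2 ⟨0, h0n⟩ ⟨n - i.val, by omega⟩ < L2 ⟨0, h0n⟩ ⟨n - j.val, by omega⟩
        exact (hch ⟨0, h0n⟩ ⟨n - j.val, by omega⟩ ⟨n - i.val, by omega⟩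
          (Fin.mk_lt_mk.mpr (by omega)) (Fin.mk_lt_mk.mpr (by omega))).1
    · intro i j hij hj
      rw [elast, v2 j (by omega) hj]
      by_cases hi0 : i.val = 0
      · rw [v0 i hi0]
        show L2 ⟨0, h0n⟩ ⟨1, by omega⟩ < L2 ⟨n - j.val, by omega⟩ ⟨1, by omega⟩
        rw [hL2symm ⟨n - j.val, by omega⟩ ⟨1, by omega⟩]
        exact (hch ⟨0, h0n⟩ ⟨1, by omega⟩ ⟨n - j.val, by omega⟩
          (Fin.mk_lt_mk.mpr (by omega)) (Fin.mk_lt_mk.mpr (by omega))).2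
      · rw [v2 i (by omega) (by omega)]
        show L2 ⟨n - i.val, by omega⟩ ⟨1, by omega⟩ < L2 ⟨n - j.val, by omega⟩ ⟨1, by omega⟩
        rw [hL2symm ⟨n - i.val, by omega⟩ ⟨1, by omega⟩,
          hL2symm ⟨n - j.val, by omega⟩ ⟨1, by omega⟩]
        have hin := i.isLt
        exact (hch ⟨1, by omega⟩ ⟨n - j.val, by omega⟩ ⟨n - i.val, by omega⟩
          (Fin.mk_lt_mk.mpr (by omega)) (Fin.mk_lt_mk.mpr (by omega))).1
  · -- pattern 4 : q < r < p
    have hch : ∀ i j k : Fin n, i < j → j < k → L2 i k < L2 j k ∧ L2 j k < L2 i j :=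
      fun i j k hij hjk => pat_eq_four (hne_qr i j k hij hjk) (hpat i j k hij hjk)
    set φ : Fin n → Fin N :=
      fun i => if h0 : i.val = 0 then w ⟨n - 1, h1n⟩ else if h1 : i.val = n - 1 then
        w ⟨n - 2, by omega⟩ else w ⟨i.val - 1, by omega⟩ with hφ
    have v0 : ∀ i : Fin n, i.val = 0 → φ i = w ⟨n - 1, h1n⟩ := by
      intro i hi
      simp only [hφ]
      rw [dif_pos hi]
    have v1 : ∀ i : Fin n, i.val = n - 1 → φ i = w ⟨n - 2, by omega⟩ := by
      intro i hi
      simp only [hφ]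
      rw [dif_neg (by omega), dif_pos hi]
    have v2 : ∀ i : Fin n, 0 < i.val → i.val < n - 1 → φ i = w ⟨i.val - 1, by omega⟩ := by
      intro i hi1 hi2
      simp only [hφ]
      rw [dif_neg (by omega), dif_neg (by omega)]
    have e0 : φ ⟨0, h0n⟩ = w ⟨n - 1, h1n⟩ := v0 _ rfl
    have elast : φ ⟨n - 1, h1n⟩ = w ⟨n - 2, by omega⟩ := v1 _ rfl
    have hinj : Function.Injective φ := by
      intro i j h
      have hin := i.isLt
      have hjn := j.isLt
      by_cases hi0 : i.val = 0 <;> by_cases hj0 : j.val = 0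
      · exact Fin.ext (by omega)
      · by_cases hj1 : j.val = n - 1
        · rw [v0 i hi0, v1 j hj1] at h
          have hv := congrArg Fin.val (hwinj h)
          simp only [Fin.val_mk] at hv
          exact absurd hv (by omega)
        · rw [v0 i hi0, v2 j (by omega) (by omega)] at h
          have hv := congrArg Fin.val (hwinj h)
          simp only [Fin.val_mk] at hv
          exact absurd hv (by omega)
      · by_cases hi1 : i.val = n - 1
        · rw [v1 i hi1, v0 j hj0] at h
          have hv := congrArg Fin.val (hwinj h)
          simp only [Fin.val_mk] at hv
          exact absurd hv (by omega)
        · rw [v2 i (by omega) (by omega), v0 j hj0] at h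
          have hv := congrArg Fin.val (hwinj h)
          simp only [Fin.val_mk] at hv
          exact absurd hv (by omega)
      · by_cases hi1 : i.val = n - 1 <;> by_cases hj1 : j.val = n - 1
        · exact Fin.ext (by omega)
        · rw [v1 i hi1, v2 j (by omega) (by omega)] at h
          have hv := congrArg Fin.val (hwinj h)
          simp only [Fin.val_mk] at hv
          exact absurd hv (by omega)
        · rw [v2 i (by omega) (by omega), v1 j hj1] at h
          have hv := congrArg Fin.val (hwinj h)
          simp only [Fin.val_mk] at hv
          exact absurd hv (by omega)
        · rw [v2 i (by omega) (by omega), v2 j (by omega) (by omega)] at h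
          have hv := congrArg Fin.val (hwinj h)
          simp only [Fin.val_mk] at hv
          exact Fin.ext (by omega)
    refine ⟨φ, isCopy_of hn G hG H hH φ hinj ?_ ?_⟩
    · intro i j h0 hij
      have hjn := j.isLt
      rw [e0, v2 i (by omega) (by omega)]
      by_cases hj : j.val = n - 1
      · rw [v1 j hj]
        show L2 ⟨n - 1, h1n⟩ ⟨i.val - 1, by omega⟩ < L2 ⟨n - 1, h1n⟩ ⟨n - 2, by omega⟩
        rw [hL2symm ⟨n - 1, h1n⟩ ⟨i.val - 1, by omega⟩,
          hL2symm ⟨n - 1, h1n⟩ ⟨n - 2, by omega⟩]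
        exact (hch ⟨i.val - 1, by omega⟩ ⟨n - 2, by omega⟩ ⟨n - 1, h1n⟩
          (Fin.mk_lt_mk.mpr (by omega)) (Fin.mk_lt_mk.mpr (by omega))).1
      · rw [v2 j (by omega) (by omega)]
        show L2 ⟨n - 1, h1n⟩ ⟨i.val - 1, by omega⟩ < L2 ⟨n - 1, h1n⟩ ⟨j.val - 1, by omega⟩
        rw [hL2symm ⟨n - 1, h1n⟩ ⟨i.val - 1, by omega⟩,
          hL2symm ⟨n - 1, h1n⟩ ⟨j.val - 1, by omega⟩]
        exact (hch ⟨i.val - 1, by omega⟩ ⟨j.val - 1, by omega⟩ ⟨n - 1, h1n⟩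
          (Fin.mk_lt_mk.mpr (by omega)) (Fin.mk_lt_mk.mpr (by omega))).1
    · intro i j hij hj
      rw [elast, v2 j (by omega) hj]
      by_cases hi0 : i.val = 0
      · rw [v0 i hi0]
        show L2 ⟨n - 1, h1n⟩ ⟨n - 2, by omega⟩ < L2 ⟨j.val - 1, by omega⟩ ⟨n - 2, by omega⟩
        rw [hL2symm ⟨n - 1, h1n⟩ ⟨n - 2, by omega⟩]
        exact (hch ⟨j.val - 1, by omega⟩ ⟨n - 2, by omega⟩ ⟨n - 1, h1n⟩
          (Fin.mk_lt_mk.mpr (by omega)) (Fin.mk_lt_mk.mpr (by omega))).2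
      · rw [v2 i (by omega) (by omega)]
        show L2 ⟨i.val - 1, by omega⟩ ⟨n - 2, by omega⟩ < L2 ⟨j.val - 1, by omega⟩ ⟨n - 2, by omega⟩
        exact (hch ⟨i.val - 1, by omega⟩ ⟨j.val - 1, by omega⟩ ⟨n - 2, by omega⟩
          (Fin.mk_lt_mk.mpr (by omega)) (Fin.mk_lt_mk.mpr (by omega))).1
  · -- pattern 5 : r < q < p
    have hch : ∀ i j k : Fin n, i < j → j < k → L2 j k < L2 i k ∧ L2 i k < L2 i j :=
      fun i j k hij hjk => pat_eq_five (hne_pq i j k hij hjk) (hpat i j k hij hjk)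
    set φ : Fin n → Fin N := fun i => w ⟨n - 1 - i.val, by omega⟩ with hφ
    have vv : ∀ i : Fin n, φ i = w ⟨n - 1 - i.val, by omega⟩ := fun i => rfl
    have elast : φ ⟨n - 1, h1n⟩ = w ⟨0, h0n⟩ := by
      rw [vv]
      exact congrArg w (Fin.ext (by simp only [Fin.val_mk]; omega))
    have e0 : φ ⟨0, h0n⟩ = w ⟨n - 1, h1n⟩ := by
      rw [vv]
      exact congrArg w (Fin.ext (by simp only [Fin.val_mk]; omega))
    have hinj : Function.Injective φ := by
      intro i j h
      have hin := i.isLt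
      have hjn := j.isLt
      rw [vv, vv] at h
      have hv := congrArg Fin.val (hwinj h)
      simp only [Fin.val_mk] at hv
      exact Fin.ext (by omega)
    refine ⟨φ, isCopy_of hn G hG H hH φ hinj ?_ ?_⟩
    · intro i j h0 hij
      have hjn := j.isLt
      rw [e0, vv i, vv j]
      show L2 ⟨n - 1, h1n⟩ ⟨n - 1 - i.val, by omega⟩ < L2 ⟨n - 1, h1n⟩ ⟨n - 1 - j.val, by omega⟩
      rw [hL2symm ⟨n - 1, h1n⟩ ⟨n - 1 - i.val, by omega⟩,
        hL2symm ⟨n - 1, h1n⟩ ⟨n - 1 - j.val, by omega⟩]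
      exact (hch ⟨n - 1 - j.val, by omega⟩ ⟨n - 1 - i.val, by omega⟩ ⟨n - 1, h1n⟩
        (Fin.mk_lt_mk.mpr (by omega)) (Fin.mk_lt_mk.mpr (by omega))).1
    · intro i j hij hj
      rw [elast, vv i, vv j]
      show L2 ⟨n - 1 - i.val, by omega⟩ ⟨0, h0n⟩ < L2 ⟨n - 1 - j.val, by omega⟩ ⟨0, h0n⟩
      rw [hL2symm ⟨n - 1 - i.val, by omega⟩ ⟨0, h0n⟩,
        hL2symm ⟨n - 1 - j.val, by omega⟩ ⟨0, h0n⟩]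
      exact (hch ⟨0, h0n⟩ ⟨n - 1 - j.val, by omega⟩ ⟨n - 1 - i.val, by omega⟩
        (Fin.mk_lt_mk.mpr (by omega)) (Fin.mk_lt_mk.mpr (by omega))).2

/-- **`D_n` is Turánable but not tileable**, for every `n ≥ 4`. -/
theorem Dn_turanable_not_tileable (n : ℕ) (hn : 4 ≤ n) (G : EdgeOrderedGraph (Fin n))
    (hG : IsDn n G) : Turanable G ∧ ¬ Tileable G :=
  ⟨turanable_of_isDn n hn G hG, not_tileable_of_isDn n hn G hG⟩
end

section
/- No edge-ordering of K₄⁻ (the complete graph on four vertices with one edge removed) is tileable. -/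
open EdgeOrderedGraph

lemma special_lt (t : ℕ) (ht : 0 < t) (σ : ℝ) (hσ : σ = 1 ∨ σ = -1) (j n : ℕ) (hj : j < 2*t) :
    σ * j - ((t:ℝ)^2 + t) < n := by
  have h0 : (0:ℝ) ≤ (n:ℝ) := Nat.cast_nonneg n
  have h0j : (0:ℝ) ≤ (j:ℝ) := Nat.cast_nonneg j
  have hj' : (j:ℝ) < 2*t := by exact_mod_cast hj
  have ht' : (1:ℝ) ≤ t := by exact_mod_cast ht
  rcases hσ with h|h <;> subst h <;> nlinarith [sq_nonneg ((t:ℝ) - 1)]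

lemma key_nat {t M1 m1 M2 m2 : ℕ} (h1 : m1 < t) (h2 : m2 < t) (h : t*M1 + m1 = t*M2 + m2) :
    M1 = M2 ∧ m1 = m2 := by
  rcases lt_trichotomy M1 M2 with hM|hM|hM
  · exfalso
    have hle : t*(M1+1) ≤ t*M2 := Nat.mul_le_mul_left t hM
    rw [Nat.mul_add, mul_one] at hle
    linarith
  · subst hM; exact ⟨rfl, Nat.add_left_cancel h⟩
  · exfalso
    have hle : t*(M2+1) ≤ t*M1 := Nat.mul_le_mul_left t hM
    rw [Nat.mul_add, mul_one] at hle
    linarith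

lemma key_lt {t P Q R : ℕ} (hQt : Q < t) (hRt : R < t) (hPQ : P ≠ Q) (hPR : P ≠ R)
    (h : t * max P Q + min P Q < t * max P R + min P R) : Q < R := by
  rcases lt_trichotomy Q R with h'|h'|h'
  · exact h'
  · subst h'; exact absurd h (lt_irrefl _)
  · exfalso
    rcases lt_or_gt_of_ne hPQ with h1|h1 <;> rcases lt_or_gt_of_ne hPR with h2|h2
    · -- P < Q, P < R
      rw [max_eq_right h1.le, min_eq_left h1.le, max_eq_right h2.le, min_eq_left h2.le] at h
      have : t*R ≤ t*Q := Nat.mul_le_mul_left t h'.le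
      omega
    · -- P < Q, R < P
      rw [max_eq_right h1.le, min_eq_left h1.le, max_eq_left h2.le, min_eq_right h2.le] at h
      have : t*(P+1) ≤ t*Q := Nat.mul_le_mul_left t h1
      rw [Nat.mul_add, mul_one] at this
      omega
    · -- Q < P, P < R : then Q < R, contradiction with R < Q
      omega
    · -- Q < P, R < P
      rw [max_eq_left h1.le, min_eq_right h1.le, max_eq_left h2.le, min_eq_right h2.le] at h
      omega

lemma contra_pair {σ La Lb Lc Ld X Y : ℝ}
    (hσ : σ = 1 ∨ σ = -1)
    (hm : σ = -1 ↔ (La < Lb ↔ Lc < Ld))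
    (hne1 : La ≠ Lb) (hne2 : Lc ≠ Ld)
    (h1 : La < Lb → σ * X < σ * Y) (h2 : Lb < La → σ * Y < σ * X)
    (h3 : Lc < Ld → X < Y) (h4 : Ld < Lc → Y < X) : False := by
  rcases hσ with h|h <;> subst h
  · have hnb : ¬ (La < Lb ↔ Lc < Ld) := fun hb => by
      have : (1:ℝ) = -1 := hm.mpr hb
      norm_num at this
    rcases lt_or_gt_of_ne hne1 with hab|hab <;> rcases lt_or_gt_of_ne hne2 with hcd|hcd
    · exact hnb (iff_of_true hab hcd)
    · have := h1 hab; have := h4 hcd; linarith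
    · have := h2 hab; have := h3 hcd; linarith
    · exact hnb (iff_of_false (lt_asymm hab) (lt_asymm hcd))
  · have hb := hm.mp rfl
    rcases lt_or_gt_of_ne hne1 with hab|hab <;> rcases lt_or_gt_of_ne hne2 with hcd|hcd
    · have := h1 hab; have := h3 hcd; linarith
    · exact lt_asymm (hb.mp hab) hcd
    · exact lt_asymm (hb.mpr hcd) hab
    · have := h2 hab; have := h4 hcd; linarith

noncomputable def host (t : ℕ) (ht : 0 < t) (σ : ℝ) (hσ : σ = 1 ∨ σ = -1) :
    EdgeOrderedGraph (Fin t) where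
  graph := ⊤
  label := Sym2.lift ⟨fun a b =>
      if a.val = 0 ∨ b.val = 0 then σ * ((a.val : ℝ) + b.val) - ((t:ℝ)^2 + t)
      else ((t * max a.val b.val + min a.val b.val : ℕ) : ℝ), by
    intro a b
    dsimp only
    rcases Decidable.em (a.val = 0 ∨ b.val = 0) with h | h
    · rw [if_pos h, if_pos h.symm]
      ring_nf
    · rw [if_neg h, if_neg (fun h' => h h'.symm)]
      rw [max_comm, min_comm]⟩
  inj := by
    intro e₁ h₁ e₂ h₂ heq
    induction e₁ using Sym2.ind with
    | _ a b =>
    induction e₂ using Sym2.ind with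
    | _ c d =>
    rw [SimpleGraph.mem_edgeSet, SimpleGraph.top_adj] at h₁ h₂
    simp only [Sym2.lift_mk] at heq
    have hab : a.val ≠ b.val := fun h => h₁ (Fin.val_injective h)
    have hcd : c.val ≠ d.val := fun h => h₂ (Fin.val_injective h)
    rw [Sym2.eq_iff]
    have bnd : a.val < t ∧ b.val < t ∧ c.val < t ∧ d.val < t := ⟨a.2, b.2, c.2, d.2⟩
    by_cases hx : a.val = 0 ∨ b.val = 0 <;> by_cases hy : c.val = 0 ∨ d.val = 0
    · rw [if_pos hx, if_pos hy] at heq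
      have hσ0 : σ ≠ 0 := by rcases hσ with h|h <;> rw [h] <;> norm_num
      have hsum : ((a.val : ℝ) + b.val) = ((c.val:ℝ) + d.val) := mul_left_cancel₀ hσ0 (by linarith)
      have hsum' : a.val + b.val = c.val + d.val := by exact_mod_cast hsum
      have key : (a.val = c.val ∧ b.val = d.val) ∨ (a.val = d.val ∧ b.val = c.val) := by omega
      rcases key with ⟨u1,u2⟩|⟨u1,u2⟩
      · exact Or.inl ⟨Fin.val_injective u1, Fin.val_injective u2⟩
      · exact Or.inr ⟨Fin.val_injective u1, Fin.val_injective u2⟩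
    · exfalso
      rw [if_pos hx, if_neg hy] at heq
      have hsl := special_lt t ht σ hσ (a.val + b.val)
        (t * max c.val d.val + min c.val d.val) (by omega)
      push_cast at hsl heq
      linarith
    · exfalso
      rw [if_neg hx, if_pos hy] at heq
      have hsl := special_lt t ht σ hσ (c.val + d.val)
        (t * max a.val b.val + min a.val b.val) (by omega)
      push_cast at hsl heq
      linarith
    · rw [if_neg hx, if_neg hy] at heq
      have h' : t * max a.val b.val + min a.val b.val = t * max c.val d.val + min c.val d.val := by
        exact_mod_cast heq
      obtain ⟨hM, hm⟩ := key_nat (lt_of_le_of_lt (min_le_left _ _) a.2)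
        (lt_of_le_of_lt (min_le_left _ _) c.2) h'
      have key : (a.val = c.val ∧ b.val = d.val) ∨ (a.val = d.val ∧ b.val = c.val) := by omega
      rcases key with ⟨u1,u2⟩|⟨u1,u2⟩
      · exact Or.inl ⟨Fin.val_injective u1, Fin.val_injective u2⟩
      · exact Or.inr ⟨Fin.val_injective u1, Fin.val_injective u2⟩

lemma host_label_special (t : ℕ) (ht : 0 < t) (σ : ℝ) (hσ : σ = 1 ∨ σ = -1) (x y : Fin t)
    (h : x.val = 0 ∨ y.val = 0) :
    (host t ht σ hσ).label s(x,y) = σ * ((x.val:ℝ) + y.val) - ((t:ℝ)^2 + t) := by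
  show Sym2.lift _ _ = _
  rw [Sym2.lift_mk]
  dsimp only
  rw [if_pos h]

lemma host_label_internal (t : ℕ) (ht : 0 < t) (σ : ℝ) (hσ : σ = 1 ∨ σ = -1) (x y : Fin t)
    (hx : x.val ≠ 0) (hy : y.val ≠ 0) :
    (host t ht σ hσ).label s(x,y) = ((t * max x.val y.val + min x.val y.val : ℕ) : ℝ) := by
  show Sym2.lift _ _ = _
  rw [Sym2.lift_mk]
  dsimp only
  rw [if_neg (by tauto)]

def D2cond (G : EdgeOrderedGraph (Fin 4)) : Prop :=
  G.label s(0,2) < G.label s(0,1) ∧ G.label s(0,2) < G.label s(0,3) ∧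
  G.label s(0,2) < G.label s(1,3) ∧ G.label s(1,2) < G.label s(0,1) ∧
  G.label s(1,2) < G.label s(0,3) ∧ G.label s(1,2) < G.label s(1,3)

def D3cond (G : EdgeOrderedGraph (Fin 4)) : Prop :=
  G.label s(0,3) < G.label s(0,1) ∧ G.label s(0,3) < G.label s(0,2) ∧
  G.label s(0,3) < G.label s(1,2) ∧ G.label s(1,3) < G.label s(0,1) ∧
  G.label s(1,3) < G.label s(0,2) ∧ G.label s(1,3) < G.label s(1,2)

lemma host_no_tiling (G : EdgeOrderedGraph (Fin 4))
    (hG : G.graph = (⊤ : SimpleGraph (Fin 4)).deleteEdges {s((2 : Fin 4), (3 : Fin 4))})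
    (t : ℕ) (ht : 0 < t) (σ : ℝ) (hσ : σ = 1 ∨ σ = -1)
    (hcond : ((D2cond G ∨ D3cond G) ∧
        (σ = -1 ↔ (G.label s(0,2) < G.label s(1,2) ↔ G.label s(0,3) < G.label s(1,3))))
      ∨ (¬ (D2cond G ∨ D3cond G) ∧
        (σ = -1 ↔ (G.label s(0,2) < G.label s(0,3) ↔ G.label s(1,2) < G.label s(1,3))))) :
    ¬ HasPerfectTiling G (host t ht σ hσ) := by
  intro htile
  obtain ⟨T, hT1, -, hT3⟩ := htile
  obtain ⟨⟨φ, w⟩, ⟨hφT, hφw⟩, -⟩ := hT3 ⟨0, ht⟩ (Set.mem_univ _)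
  obtain ⟨hinj, -, hmono⟩ := hT1 φ hφT
  simp only at hφw
  have hswap : ∀ a b : Fin 4, G.label s(a,b) = G.label s(b,a) := fun a b => by
    rw [Sym2.eq_swap]
  have hadj : ∀ a b : Fin 4, a ≠ b → s(a,b) ≠ s((2 : Fin 4),(3 : Fin 4)) → G.graph.Adj a b := by
    intro a b h1 h2
    rw [hG, SimpleGraph.deleteEdges_adj]
    exact ⟨by simpa using h1, by simpa using h2⟩
  have a01 := hadj 0 1 (by decide) (by decide)
  have a02 := hadj 0 2 (by decide) (by decide)
  have a03 := hadj 0 3 (by decide) (by decide)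
  have a12 := hadj 1 2 (by decide) (by decide)
  have a13 := hadj 1 3 (by decide) (by decide)
  have a10 := a01.symm
  have a20 := a02.symm
  have a21 := a12.symm
  have a30 := a03.symm
  have a31 := a13.symm
  have hval : ∀ x : Fin 4, x ≠ w → (φ x).val ≠ 0 := by
    intro x hx h
    exact hx (hinj (show φ x = φ w by rw [hφw]; exact Fin.ext h))
  have hspec : ∀ x : Fin 4, x ≠ w →
      (host t ht σ hσ).label s(φ w, φ x) = σ * ((φ x).val : ℝ) - ((t:ℝ)^2 + t) := by
    intro x hx
    rw [hφw, host_label_special t ht σ hσ _ _ (Or.inl rfl)]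
    norm_num
  have hint : ∀ x y : Fin 4, x ≠ w → y ≠ w →
      (host t ht σ hσ).label s(φ x, φ y)
        = ((t * max (φ x).val (φ y).val + min (φ x).val (φ y).val : ℕ) : ℝ) :=
    fun x y hx hy => host_label_internal t ht σ hσ _ _ (hval x hx) (hval y hy)
  have hlabne : ∀ (a b c d : Fin 4), G.graph.Adj a b → G.graph.Adj c d →
      s(a,b) ≠ s(c,d) → G.label s(a,b) ≠ G.label s(c,d) :=
    fun a b c d h1 h2 hne h => hne (G.inj _ (G.graph.mem_edgeSet.mpr h1) _
      (G.graph.mem_edgeSet.mpr h2) h)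
  have hstar : ∀ b c d : Fin 4, G.graph.Adj w b → G.graph.Adj c d → c ≠ w → d ≠ w →
      G.label s(w,b) < G.label s(c,d) := by
    intro b c d h1 h2 hc hd
    have hne : G.label s(w,b) ≠ G.label s(c,d) := by
      intro h
      have h2' := G.inj _ (G.graph.mem_edgeSet.mpr h1) _ (G.graph.mem_edgeSet.mpr h2) h
      have hmem : w ∈ s(c,d) := by rw [← h2']; exact Sym2.mem_mk_left w b
      rcases Sym2.mem_iff.mp hmem with h|h
      · exact hc h.symm
      · exact hd h.symm
    rcases lt_or_gt_of_ne hne with h|h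
    · exact h
    · exfalso
      have hm := hmono c d w b h2 h1 h
      rw [hspec b h1.ne', hint c d hc hd] at hm
      have hsl := special_lt t ht σ hσ (φ b).val
        (t * max (φ c).val (φ d).val + min (φ c).val (φ d).val) (by have := (φ b).2; omega)
      linarith
  have hpair_at : ∀ a b : Fin 4, G.graph.Adj w a → G.graph.Adj w b →
      G.label s(w,a) < G.label s(w,b) → σ * ((φ a).val : ℝ) < σ * ((φ b).val : ℝ) := by
    intro a b h1 h2 hlt
    have hm := hmono w a w b h1 h2 hlt
    rw [hspec a h1.ne', hspec b h2.ne'] at hm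
    linarith
  have hpair_int : ∀ p q r : Fin 4, G.graph.Adj p q → G.graph.Adj p r →
      p ≠ w → q ≠ w → r ≠ w → G.label s(p,q) < G.label s(p,r) → (φ q).val < (φ r).val := by
    intro p q r h1 h2 hp hq hr hlt
    have hm := hmono p q p r h1 h2 hlt
    rw [hint p q hp hq, hint p r hp hr] at hm
    exact key_lt (φ q).2 (φ r).2
      (fun h => h1.ne (hinj (Fin.ext h))) (fun h => h2.ne (hinj (Fin.ext h)))
      (by exact_mod_cast hm)
  have hwcase : ∀ x : Fin 4, x = 0 ∨ x = 1 ∨ x = 2 ∨ x = 3 := by decide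
  rcases hwcase w with rfl|rfl|rfl|rfl
  · -- w = 0
    have s1 : G.label s(0,3) < G.label s(1,2) := hstar 3 1 2 a03 a12 (by decide) (by decide)
    have s2 : G.label s(0,2) < G.label s(1,3) := hstar 2 1 3 a02 a13 (by decide) (by decide)
    rcases hcond with ⟨hD, -⟩ | ⟨-, hm⟩
    · rcases hD with h|h
      · linarith [h.2.2.2.2.1]
      · linarith [h.2.2.2.2.1]
    · exact contra_pair hσ hm (hlabne 0 2 0 3 a02 a03 (by decide))
        (hlabne 1 2 1 3 a12 a13 (by decide))
        (fun h => hpair_at 2 3 a02 a03 h)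
        (fun h => hpair_at 3 2 a03 a02 h)
        (fun h => by exact_mod_cast hpair_int 1 2 3 a12 a13 (by decide) (by decide) (by decide) h)
        (fun h => by exact_mod_cast hpair_int 1 3 2 a13 a12 (by decide) (by decide) (by decide) h)
  · -- w = 1
    have s1 : G.label s(1,0) < G.label s(0,2) := hstar 0 0 2 a10 a02 (by decide) (by decide)
    have s2 : G.label s(1,0) < G.label s(0,3) := hstar 0 0 3 a10 a03 (by decide) (by decide)
    rw [hswap 1 0] at s1 s2
    rcases hcond with ⟨hD, -⟩ | ⟨-, hm⟩
    · rcases hD with h|h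
      · linarith [h.1]
      · linarith [h.1]
    · exact contra_pair hσ (hm.trans Iff.comm) (hlabne 1 2 1 3 a12 a13 (by decide))
        (hlabne 0 2 0 3 a02 a03 (by decide))
        (fun h => hpair_at 2 3 a12 a13 h)
        (fun h => hpair_at 3 2 a13 a12 h)
        (fun h => by exact_mod_cast hpair_int 0 2 3 a02 a03 (by decide) (by decide) (by decide) h)
        (fun h => by exact_mod_cast hpair_int 0 3 2 a03 a02 (by decide) (by decide) (by decide) h)
  · -- w = 2
    rcases hcond with ⟨-, hm⟩ | ⟨hD, -⟩
    · exact contra_pair hσ hm (hlabne 0 2 1 2 a02 a12 (by decide))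
        (hlabne 0 3 1 3 a03 a13 (by decide))
        (fun h => hpair_at 0 1 a20 a21 (by rw [hswap 2 0, hswap 2 1]; exact h))
        (fun h => hpair_at 1 0 a21 a20 (by rw [hswap 2 0, hswap 2 1]; exact h))
        (fun h => by
          exact_mod_cast hpair_int 3 0 1 a30 a31 (by decide) (by decide) (by decide)
            (by rw [hswap 3 0, hswap 3 1]; exact h))
        (fun h => by
          exact_mod_cast hpair_int 3 1 0 a31 a30 (by decide) (by decide) (by decide)
            (by rw [hswap 3 0, hswap 3 1]; exact h))
    · have q1 := hstar 0 0 1 a20 a01 (by decide) (by decide)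
      have q2 := hstar 0 0 3 a20 a03 (by decide) (by decide)
      have q3 := hstar 0 1 3 a20 a13 (by decide) (by decide)
      have q4 := hstar 1 0 1 a21 a01 (by decide) (by decide)
      have q5 := hstar 1 0 3 a21 a03 (by decide) (by decide)
      have q6 := hstar 1 1 3 a21 a13 (by decide) (by decide)
      rw [hswap 2 0] at q1 q2 q3
      rw [hswap 2 1] at q4 q5 q6
      exact hD (Or.inl ⟨q1, q2, q3, q4, q5, q6⟩)
  · -- w = 3
    rcases hcond with ⟨-, hm⟩ | ⟨hD, -⟩
    · exact contra_pair hσ (hm.trans Iff.comm) (hlabne 0 3 1 3 a03 a13 (by decide))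
        (hlabne 0 2 1 2 a02 a12 (by decide))
        (fun h => hpair_at 0 1 a30 a31 (by rw [hswap 3 0, hswap 3 1]; exact h))
        (fun h => hpair_at 1 0 a31 a30 (by rw [hswap 3 0, hswap 3 1]; exact h))
        (fun h => by
          exact_mod_cast hpair_int 2 0 1 a20 a21 (by decide) (by decide) (by decide)
            (by rw [hswap 2 0, hswap 2 1]; exact h))
        (fun h => by
          exact_mod_cast hpair_int 2 1 0 a21 a20 (by decide) (by decide) (by decide)
            (by rw [hswap 2 0, hswap 2 1]; exact h))
    · have q1 := hstar 0 0 1 a30 a01 (by decide) (by decide)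
      have q2 := hstar 0 0 2 a30 a02 (by decide) (by decide)
      have q3 := hstar 0 1 2 a30 a12 (by decide) (by decide)
      have q4 := hstar 1 0 1 a31 a01 (by decide) (by decide)
      have q5 := hstar 1 0 2 a31 a02 (by decide) (by decide)
      have q6 := hstar 1 1 2 a31 a12 (by decide) (by decide)
      rw [hswap 3 0] at q1 q2 q3
      rw [hswap 3 1] at q4 q5 q6
      exact hD (Or.inr ⟨q1, q2, q3, q4, q5, q6⟩)

/-- **No edge-ordering of `K₄⁻` is tileable.** -/
theorem K4_minus_not_tileable (G : EdgeOrderedGraph (Fin 4))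
    (hG : G.graph = (⊤ : SimpleGraph (Fin 4)).deleteEdges {s((2 : Fin 4), (3 : Fin 4))}) :
    ¬ Tileable G := by
  classical
  rintro ⟨t, ht, -, hall⟩
  by_cases hD : D2cond G ∨ D3cond G
  · by_cases hB : (G.label s(0,2) < G.label s(1,2) ↔ G.label s(0,3) < G.label s(1,3))
    · exact host_no_tiling G hG t ht (-1) (Or.inr rfl)
        (Or.inl ⟨hD, iff_of_true rfl hB⟩) (hall _ rfl)
    · exact host_no_tiling G hG t ht 1 (Or.inl rfl)
        (Or.inl ⟨hD, iff_of_false (by norm_num) hB⟩) (hall _ rfl)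
  · by_cases hB : (G.label s(0,2) < G.label s(0,3) ↔ G.label s(1,2) < G.label s(1,3))
    · exact host_no_tiling G hG t ht (-1) (Or.inr rfl)
        (Or.inr ⟨hD, iff_of_true rfl hB⟩) (hall _ rfl)
    · exact host_no_tiling G hG t ht 1 (Or.inl rfl)
        (Or.inr ⟨hD, iff_of_false (by norm_num) hB⟩) (hall _ rfl)
end

section
/- Let F be a Turánable edge-ordered graph and let v ∈ V(F) be a vertex incident to the smallest edge of F. Let F′ be the edge-ordered graph obtained from F by adding a new vertex v′ and the edge vv′, placed smaller than all edges of F in the edge order. Then F′ is Turánable. -/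
open EdgeOrderedGraph

/-!
If `K_N` contains no copy of `F'`, then for every copy `ψ` of `F` the edge `ψ v ψ u` is smaller
than every edge from `ψ v` to a vertex outside the copy: otherwise that edge lies below all edges
of the copy (as `vu` is the smallest edge of `F`) and extends `ψ` to a copy of `F'`. Consequently,
for a fixed vertex `r`, all `y` such that some copy maps `vu` to `ry` lie in one copy, namely the
one with the largest such edge, so there are at most `|F|` of them. A digraph with out-degrees at
most `d` on `(2d + 1) t` vertices has an independent set of size `t`, and a copy of `F` inside
such a set (which exists by Turánability of `F`) would map `vu` to an arc.
-/

section OutDegree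

variable {α : Type*} [DecidableEq α] (out : α → Finset α) {d : ℕ}

theorem exists_card_filter_mem_or_mem_le (hout : ∀ a, (out a).card ≤ d) {S : Finset α}
    (hS : S.Nonempty) : ∃ a ∈ S, (S.filter fun b => b ∈ out a ∨ a ∈ out b).card ≤ 2 * d := by
  have hle : ∀ b, (S.filter (· ∈ out b)).card ≤ d := fun b =>
    (Finset.card_le_card fun _ hc => (Finset.mem_filter.1 hc).2).trans (hout b)
  refine Finset.exists_le_of_sum_le hS ?_
  calc ∑ a ∈ S, (S.filter fun b => b ∈ out a ∨ a ∈ out b).card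
      ≤ ∑ a ∈ S, ((S.filter (· ∈ out a)).card + (S.filter fun b => a ∈ out b).card) :=
        Finset.sum_le_sum fun a _ => by
          rw [Finset.filter_or]
          exact Finset.card_union_le _ _
    _ = ∑ a ∈ S, ((S.filter (· ∈ out a)).card + (S.filter (· ∈ out a)).card) := by
        rw [Finset.sum_add_distrib, Finset.sum_add_distrib]
        congr 1
        exact Finset.sum_card_bipartiteAbove_eq_sum_card_bipartiteBelow (fun a b => a ∈ out b)
    _ ≤ ∑ a ∈ S, 2 * d := Finset.sum_le_sum fun a _ => by linarith [hle a]

theorem exists_independent_subset_of_card_out_le (hout : ∀ a, (out a).card ≤ d)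
    (S : Finset α) :
    ∃ A ⊆ S, S.card ≤ (2 * d + 1) * A.card ∧ (A : Set α).Pairwise fun a b => b ∉ out a := by
  induction S using Finset.strongInduction with
  | H S ih =>
  rcases S.eq_empty_or_nonempty with rfl | hS
  · exact ⟨∅, subset_rfl, by simp, by simp⟩
  obtain ⟨a, haS, ha⟩ := exists_card_filter_mem_or_mem_le out hout hS
  set N := insert a (S.filter fun b => b ∈ out a ∨ a ∈ out b)
  obtain ⟨A, hAS, hcard, hA⟩ := ih (S \ N) (Finset.sdiff_ssubset
    (Finset.insert_subset haS (Finset.filter_subset _ _)) ⟨a, Finset.mem_insert_self _ _⟩)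
  have hA' : ∀ b ∈ A, b ≠ a ∧ b ∉ out a ∧ a ∉ out b := fun b hb => by
    have := hAS hb
    simp only [N, Finset.mem_sdiff, Finset.mem_insert, Finset.mem_filter] at this
    tauto
  refine ⟨insert a A, Finset.insert_subset haS (hAS.trans Finset.sdiff_subset), ?_, ?_⟩
  · have hN : N.card ≤ 2 * d + 1 := (Finset.card_insert_le _ _).trans (by omega)
    rw [Finset.card_insert_of_notMem fun h => (hA' a h).1 rfl, mul_add_one]
    linarith [Finset.card_le_card_sdiff_add_card (s := S) (t := N)]
  · rw [Finset.coe_insert, Set.pairwise_insert]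
    exact ⟨hA, fun b hb _ => ⟨(hA' b hb).2.1, (hA' b hb).2.2⟩⟩

end OutDegree

namespace EdgeOrderedGraph

variable {U V W : Type*}

section Copies

variable {F : EdgeOrderedGraph W} {G : EdgeOrderedGraph V} {φ : W → V}

theorem IsCopy.map_mem_edgeSet (h : IsCopy F G φ) {e : Sym2 W} (he : e ∈ F.graph.edgeSet) :
    e.map φ ∈ G.graph.edgeSet := by
  induction e using Sym2.ind with
  | _ a b => exact h.2.1 a b he

theorem IsCopy.label_map_lt (h : IsCopy F G φ) {e₁ e₂ : Sym2 W} (he₁ : e₁ ∈ F.graph.edgeSet)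
    (he₂ : e₂ ∈ F.graph.edgeSet) (hlt : F.label e₁ < F.label e₂) :
    G.label (e₁.map φ) < G.label (e₂.map φ) := by
  induction e₁ using Sym2.ind with
  | _ a b =>
  induction e₂ using Sym2.ind with
  | _ c d => exact h.2.2 a b c d he₁ he₂ hlt

theorem IsCopy.label_map_le (h : IsCopy F G φ) {e₁ e₂ : Sym2 W} (he₁ : e₁ ∈ F.graph.edgeSet)
    (he₂ : e₂ ∈ F.graph.edgeSet) (hle : F.label e₁ ≤ F.label e₂) :
    G.label (e₁.map φ) ≤ G.label (e₂.map φ) := by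
  rcases hle.eq_or_lt with heq | hlt
  · rw [F.inj e₁ he₁ e₂ he₂ heq]
  · exact (h.label_map_lt he₁ he₂ hlt).le

theorem isCopy_of_map (hinj : Function.Injective φ)
    (hedge : ∀ e ∈ F.graph.edgeSet, e.map φ ∈ G.graph.edgeSet)
    (hlabel : ∀ e₁ ∈ F.graph.edgeSet, ∀ e₂ ∈ F.graph.edgeSet,
      F.label e₁ < F.label e₂ → G.label (e₁.map φ) < G.label (e₂.map φ)) :
    IsCopy F G φ :=
  ⟨hinj, fun a b h => hedge s(a, b) h, fun _ _ _ _ h₁ h₂ h => hlabel _ h₁ _ h₂ h⟩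

end Copies

def comap (G : EdgeOrderedGraph V) (ι : U ↪ V) : EdgeOrderedGraph U where
  graph := G.graph.comap ι
  label e := G.label (e.map ι)
  inj e₁ h₁ e₂ h₂ h := by
    refine Sym2.map.injective ι.injective (G.inj _ ?_ _ ?_ h)
    · induction e₁ using Sym2.ind with
      | _ a b => exact h₁
    · induction e₂ using Sym2.ind with
      | _ a b => exact h₂

theorem comap_graph_eq_top {G : EdgeOrderedGraph V} (hG : G.graph = ⊤) (ι : U ↪ V) :
    (G.comap ι).graph = ⊤ := by
  simp only [comap, hG]
  exact SimpleGraph.comap_top ι.injective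

theorem IsCopy.of_comap {F : EdgeOrderedGraph W} {G : EdgeOrderedGraph V} {ι : U ↪ V}
    {ψ : W → U} (h : IsCopy F (G.comap ι) ψ) : IsCopy F G (ι ∘ ψ) :=
  ⟨ι.injective.comp h.1, h.2.1, h.2.2⟩

theorem exists_isCopy_subset_of_card_le {F : EdgeOrderedGraph W} {t : ℕ}
    (htur : ∀ H : EdgeOrderedGraph (Fin t), H.graph = ⊤ → H.ContainsCopy F)
    {G : EdgeOrderedGraph V} (hG : G.graph = ⊤) {S : Finset V} (hS : t ≤ S.card) :
    ∃ φ : W → V, IsCopy F G φ ∧ ∀ w, φ w ∈ S := by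
  obtain ⟨e⟩ : Nonempty (Fin t ↪ S) :=
    Function.Embedding.nonempty_of_card_le (by simpa using hS)
  obtain ⟨ψ, hψ⟩ := htur _ (comap_graph_eq_top hG (e.trans (Function.Embedding.subtype _)))
  exact ⟨_, hψ.of_comap, fun w => (e (ψ w)).2⟩

section PendantEdge

variable {F : EdgeOrderedGraph W} {F' : EdgeOrderedGraph (Option W)} {v : W}

theorem eq_pendant_or_exists_eq_map_some
    (hadj : ∀ a b : W, F'.graph.Adj (some a) (some b) ↔ F.graph.Adj a b)
    (hpend : ∀ w : W, F'.graph.Adj none (some w) ↔ w = v)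
    {e : Sym2 (Option W)} (he : e ∈ F'.graph.edgeSet) :
    e = s(none, some v) ∨ ∃ e' ∈ F.graph.edgeSet, e = e'.map some := by
  induction e using Sym2.ind with
  | _ a b =>
  rcases a with _ | a <;> rcases b with _ | b
  · exact (F'.graph.loopless.irrefl _ he).elim
  · exact .inl (by rw [(hpend b).1 he])
  · exact .inl (by rw [(hpend a).1 he.symm, Sym2.eq_swap])
  · exact .inr ⟨s(a, b), (hadj a b).1 he, rfl⟩

theorem IsCopy.option_elim
    (hadj : ∀ a b : W, F'.graph.Adj (some a) (some b) ↔ F.graph.Adj a b)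
    (hpend : ∀ w : W, F'.graph.Adj none (some w) ↔ w = v)
    (horder : ∀ a b c d : W, F.graph.Adj a b → F.graph.Adj c d →
      F'.label s(some a, some b) < F'.label s(some c, some d) →
        F.label s(a, b) < F.label s(c, d))
    (hnew : ∀ a b : W, F.graph.Adj a b →
      F'.label s(none, some v) < F'.label s(some a, some b))
    {G : EdgeOrderedGraph V} {ψ : W → V} (hψ : IsCopy F G ψ) {x : V} (hx : x ∉ Set.range ψ)
    (hxv : G.graph.Adj x (ψ v))
    (hlt : ∀ e ∈ F.graph.edgeSet, G.label s(x, ψ v) < G.label (e.map ψ)) :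
    IsCopy F' G (fun o => o.elim x ψ) := by
  have hcases {e} (he : e ∈ F'.graph.edgeSet) := eq_pendant_or_exists_eq_map_some hadj hpend he
  refine isCopy_of_map ?_ ?_ ?_
  · rintro (_ | a) (_ | b) h
    · rfl
    · exact (hx ⟨b, h.symm⟩).elim
    · exact (hx ⟨a, h⟩).elim
    · exact congrArg some (hψ.1 h)
  · intro e he
    rcases hcases he with rfl | ⟨e, hFe, rfl⟩
    · exact hxv
    · rw [Sym2.map_map]
      exact hψ.map_mem_edgeSet hFe
  · intro e₁ he₁ e₂ he₂ hlt'
    rcases hcases he₁ with rfl | ⟨e₁, hFe₁, rfl⟩ <;>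
      rcases hcases he₂ with rfl | ⟨e₂, hFe₂, rfl⟩
    · exact (lt_irrefl _ hlt').elim
    · rw [Sym2.map_map]
      exact hlt e₂ hFe₂
    · induction e₁ using Sym2.ind with
      | _ a b => exact ((hnew a b hFe₁).asymm hlt').elim
    · rw [Sym2.map_map, Sym2.map_map]
      refine hψ.label_map_lt hFe₁ hFe₂ ?_
      induction e₁ using Sym2.ind with
      | _ a b =>
      induction e₂ using Sym2.ind with
      | _ c d => exact horder a b c d hFe₁ hFe₂ hlt'

theorem label_lt_label_of_not_containsCopy {u : W} (hvu : F.graph.Adj v u)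
    (hsmallest : ∀ e ∈ F.graph.edgeSet, F.label s(v, u) ≤ F.label e)
    (hadj : ∀ a b : W, F'.graph.Adj (some a) (some b) ↔ F.graph.Adj a b)
    (hpend : ∀ w : W, F'.graph.Adj none (some w) ↔ w = v)
    (horder : ∀ a b c d : W, F.graph.Adj a b → F.graph.Adj c d →
      F'.label s(some a, some b) < F'.label s(some c, some d) →
        F.label s(a, b) < F.label s(c, d))
    (hnew : ∀ a b : W, F.graph.Adj a b →
      F'.label s(none, some v) < F'.label s(some a, some b))
    {G : EdgeOrderedGraph V} (hG : G.graph = ⊤) (hno : ¬ G.ContainsCopy F')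
    (ψ : W → V) (hψ : IsCopy F G ψ) (x : V) (hx : x ∉ Set.range ψ) :
    G.label s(ψ v, ψ u) < G.label s(ψ v, x) := by
  have hxv : x ≠ ψ v := fun h => hx ⟨v, h.symm⟩
  refine lt_of_le_of_ne (not_lt.1 fun hlt => hno ⟨_, hψ.option_elim hadj hpend horder hnew hx
    (by rw [hG]; exact hxv) fun e he => ?_⟩) fun heq => hx ⟨u, ?_⟩
  · calc G.label s(x, ψ v) = G.label s(ψ v, x) := by rw [Sym2.eq_swap]
      _ < G.label (s(v, u).map ψ) := hlt
      _ ≤ G.label (e.map ψ) := hψ.label_map_le hvu he (hsmallest e he)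
  · have hxe : s(ψ v, x) ∈ G.graph.edgeSet := by
      rw [SimpleGraph.mem_edgeSet, hG]
      exact hxv.symm
    exact Sym2.congr_right.1 (G.inj _ (hψ.map_mem_edgeSet (e := s(v, u)) hvu) _ hxe heq)

end PendantEdge

section CopyTargets

variable [Fintype V] {F : EdgeOrderedGraph W} {G : EdgeOrderedGraph V} {v u : W}

open Classical in
noncomputable def copyTargets (F : EdgeOrderedGraph W) (G : EdgeOrderedGraph V) (v u : W)
    (r : V) : Finset V :=
  Finset.univ.filter fun y => ∃ ψ, IsCopy F G ψ ∧ ψ v = r ∧ ψ u = y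

theorem mem_copyTargets {r y : V} :
    y ∈ copyTargets F G v u r ↔ ∃ ψ, IsCopy F G ψ ∧ ψ v = r ∧ ψ u = y := by
  simp [copyTargets]

/-- All targets lie in the copy that realizes the largest edge at `r`. -/
theorem card_copyTargets_le [Fintype W]
    (hprot : ∀ ψ, IsCopy F G ψ → ∀ x ∉ Set.range ψ, G.label s(ψ v, ψ u) < G.label s(ψ v, x))
    (r : V) : (copyTargets F G v u r).card ≤ Fintype.card W := by
  classical
  rcases (copyTargets F G v u r).eq_empty_or_nonempty with h | h
  · simp [h]
  obtain ⟨y, hy, hmax⟩ := Finset.exists_max_image _ (fun y => G.label s(r, y)) h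
  obtain ⟨ψ, hψ, rfl, rfl⟩ := mem_copyTargets.1 hy
  calc (copyTargets F G v u (ψ v)).card ≤ (Finset.univ.image ψ).card :=
        Finset.card_le_card fun z hz => by
          by_contra hz'
          exact (hprot ψ hψ z (by simpa using hz')).not_ge (hmax z hz)
    _ ≤ Fintype.card W := Finset.card_image_le

end CopyTargets

end EdgeOrderedGraph

/-- **Adding a small pendant edge preserves Turánability.** If `F` is Turánable, `v` is
incident to the smallest edge `vu` of `F`, and `F'` is obtained from `F` by adding a new
vertex (`none`) joined to `v` by an edge smaller than all edges of `F`, then `F'` is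
Turánable. -/
theorem add_pendant_edge_turanable {W : Type} [Fintype W] (F : EdgeOrderedGraph W)
    (v u : W) (hvu : F.graph.Adj v u)
    (hsmallest : ∀ e ∈ F.graph.edgeSet, F.label s(v, u) ≤ F.label e)
    (hTur : Turanable F)
    (F' : EdgeOrderedGraph (Option W))
    (hadj : ∀ a b : W, F'.graph.Adj (some a) (some b) ↔ F.graph.Adj a b)
    (hpend : ∀ w : W, F'.graph.Adj none (some w) ↔ w = v)
    (horder : ∀ a b c d : W, F.graph.Adj a b → F.graph.Adj c d →
      (F'.label s(some a, some b) < F'.label s(some c, some d) ↔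
        F.label s(a, b) < F.label s(c, d)))
    (hnew : ∀ a b : W, F.graph.Adj a b →
      F'.label s(none, some v) < F'.label s(some a, some b)) :
    Turanable F' := by
  classical
  obtain ⟨t, htur⟩ := hTur
  refine ⟨(2 * Fintype.card W + 1) * t, fun G hG => ?_⟩
  by_contra hno
  have hprot := label_lt_label_of_not_containsCopy hvu hsmallest hadj hpend
    (fun a b c d hab hcd => (horder a b c d hab hcd).1) hnew hG hno
  obtain ⟨A, -, hcard, hA⟩ := exists_independent_subset_of_card_out_le
    (copyTargets F G v u) (card_copyTargets_le hprot) Finset.univ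
  rw [Finset.card_univ, Fintype.card_fin] at hcard
  obtain ⟨φ, hφ, hφA⟩ := exists_isCopy_subset_of_card_le htur hG (S := A)
    (Nat.le_of_mul_le_mul_left hcard (Nat.succ_pos _))
  exact hA (hφA v) (hφA u) (hφ.1.ne hvu.ne) (mem_copyTargets.2 ⟨φ, hφ, rfl, rfl⟩)
end
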